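/- arXiv:1203.6303 — 3 statements merged into one kernel-verified Lean document; each statement's English description precedes it below -/
import Mathlib

section
/- Suppose w : ℝ^d × Ω → ℝ is jointly measurable, is Lipschitz in its first variable with a Lipschitz constant C independent of ω, has stationary increments, i.e. w(x, τ_z ω) − w(y, τ_z ω) = w(x+z, ω) − w(y+z, ω) for all x, y, z ∈ ℝ^d and ω ∈ Ω, and has mean-zero increments, i.e. E[w(x,·) − w(0,·)] = 0 for every x ∈ ℝ^d. Then, almost surely in ω, lim_{|y|→∞} w(y,ω)/|y| = 0. -/
open MeasureTheory Filter Topology Bornology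
open scoped RealInnerProductSpace NNReal

noncomputable section

/-- Euclidean space ℝ^d. -/
abbrev Ed (d : ℕ) := EuclideanSpace ℝ (Fin d)

section Helpers

/-- A uniformly bounded sequence is bounded above under `≤`. -/
lemma bddU {a : ℕ → ℝ} {B : ℝ} (ha : ∀ n, |a n| ≤ B) :
    IsBoundedUnder (· ≤ ·) atTop a :=
  isBoundedUnder_of ⟨B, fun n => (abs_le.1 (ha n)).2⟩

/-- A uniformly bounded sequence is bounded below under `≥`. -/
lemma bddL {a : ℕ → ℝ} {B : ℝ} (ha : ∀ n, |a n| ≤ B) :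
    IsBoundedUnder (· ≥ ·) atTop a :=
  isBoundedUnder_of ⟨-B, fun n => (abs_le.1 (ha n)).1⟩

lemma limsup_le_of_sub {a b : ℕ → ℝ} {B : ℝ} (ha : ∀ n, |a n| ≤ B) (hb : ∀ n, |b n| ≤ B)
    (h : Tendsto (fun n => a n - b n) atTop (𝓝 0)) :
    limsup a atTop ≤ limsup b atTop := by
  refine le_of_forall_pos_le_add fun δ hδ => ?_
  have hev : ∀ᶠ n in atTop, a n ≤ b n + δ := by
    filter_upwards [h.eventually (eventually_le_nhds hδ)] with n hn
    linarith
  calc limsup a atTop ≤ limsup (fun n => b n + δ) atTop := by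
        refine limsup_le_limsup hev ?_ ?_
        · exact (bddL ha).isCoboundedUnder_le
        · exact isBoundedUnder_of ⟨B + δ, fun n => add_le_add_left (abs_le.1 (hb n)).2 δ⟩
    _ = limsup b atTop + δ :=
        limsup_add_const atTop b δ (bddU hb) (bddL hb).isCoboundedUnder_le

/-- Two uniformly bounded sequences whose difference tends to zero have the same `limsup`. -/
lemma limsup_congr_of_sub {a b : ℕ → ℝ} {B : ℝ} (ha : ∀ n, |a n| ≤ B) (hb : ∀ n, |b n| ≤ B)
    (h : Tendsto (fun n => a n - b n) atTop (𝓝 0)) :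
    limsup a atTop = limsup b atTop := by
  refine le_antisymm (limsup_le_of_sub ha hb h) (limsup_le_of_sub hb ha ?_)
  have heq : (fun n => b n - a n) = fun n => -(a n - b n) := by funext n; ring
  rw [heq]
  simpa using h.neg

/-- The basic sublinearity bound for the increments of a Lipschitz function. -/
lemma seqbd (d : ℕ) (f : Ed d → ℝ) (C : ℝ) (hC : 0 ≤ C)
    (hL : ∀ x y : Ed d, |f x - f y| ≤ C * ‖x - y‖) (q : Ed d) (n : ℕ) :
    |(f ((n : ℝ) • q) - f 0) / n| ≤ C * ‖q‖ := by
  rcases Nat.eq_zero_or_pos n with hn | hn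
  · subst hn; simp; positivity
  · have hn' : (0 : ℝ) < n := by exact_mod_cast hn
    rw [abs_div, abs_of_pos hn', div_le_iff₀ hn']
    calc |f ((n : ℝ) • q) - f 0| ≤ C * ‖(n : ℝ) • q - 0‖ := hL _ _
      _ = C * ‖q‖ * n := by
          rw [sub_zero, norm_smul, Real.norm_eq_abs, abs_of_pos hn']
          ring

end Helpers

/-- Maximal-ergodic-theorem consequence (Garsia's argument): if the mean of a bounded
measurable `g` is negative, then with positive probability all Birkhoff sums of `g`
are nonpositive. -/
lemma lemA {Ω : Type*} [MeasurableSpace Ω] (P : Measure Ω) [IsProbabilityMeasure P]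
    (T : Ω → Ω) (hTm : Measurable T) (hT : MeasurePreserving T P P)
    (g : Ω → ℝ) (hg : Measurable g) (B : ℝ) (hB : ∀ ω, |g ω| ≤ B)
    (hneg : ∫ ω, g ω ∂P < 0) :
    0 < P {ω | ∀ n : ℕ, birkhoffSum T g (n + 1) ω ≤ 0} := by
  have hSmeas : ∀ n, Measurable fun ω => birkhoffSum T g n ω := by
    intro n
    unfold birkhoffSum
    exact Finset.measurable_sum _ fun k _ => hg.comp (hTm.iterate k)
  have hSbd : ∀ n ω, |birkhoffSum T g n ω| ≤ n * B := by
    intro n ω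
    calc |birkhoffSum T g n ω| ≤ ∑ k ∈ Finset.range n, |g (T^[k] ω)| :=
          Finset.abs_sum_le_sum_abs _ _
      _ ≤ ∑ _k ∈ Finset.range n, B := Finset.sum_le_sum fun k _ => hB _
      _ = n * B := by simp [mul_comm]
  -- the running maximum M N = max_{0 ≤ n ≤ N} S_n
  set M : ℕ → Ω → ℝ := fun N => Nat.rec (fun _ => 0)
    (fun N MN ω => max (MN ω) (birkhoffSum T g (N + 1) ω)) N with hM
  have hM0 : ∀ ω, M 0 ω = 0 := fun ω => rfl
  have hMsucc : ∀ N ω, M (N + 1) ω = max (M N ω) (birkhoffSum T g (N + 1) ω) := fun N ω => rfl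
  have hMmeas : ∀ N, Measurable (M N) := by
    intro N; induction N with
    | zero => exact measurable_const
    | succ N ih => exact ih.max (hSmeas (N + 1))
  have hMnonneg : ∀ N ω, 0 ≤ M N ω := by
    intro N; induction N with
    | zero => intro ω; simp [hM0]
    | succ N ih => intro ω; rw [hMsucc]; exact le_trans (ih ω) (le_max_left _ _)
  have hMmono : ∀ N ω, M N ω ≤ M (N + 1) ω := fun N ω => by
    rw [hMsucc]; exact le_max_left _ _
  have hMub : ∀ N ω, M N ω ≤ N * (|B| + 1) := by
    intro N; induction N with
    | zero => intro ω; simp [hM0]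
    | succ N ih =>
      intro ω
      rw [hMsucc, max_le_iff]
      have hBa : (0:ℝ) ≤ |B| + 1 := by positivity
      constructor
      · refine le_trans (ih ω) ?_
        push_cast
        nlinarith
      · refine le_trans (le_trans (le_abs_self _) (hSbd (N + 1) ω)) ?_
        push_cast
        nlinarith [le_abs_self B, Nat.cast_nonneg (α := ℝ) N]
  have hMbd : ∀ N ω, |M N ω| ≤ N * (|B| + 1) := fun N ω =>
    abs_le.2 ⟨le_trans (by nlinarith [Nat.cast_nonneg (α := ℝ) N, abs_nonneg B]) (hMnonneg N ω),
      hMub N ω⟩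
  -- key recursion: M (N+1) ω = max 0 (g ω + M N (T ω))
  have hkey : ∀ N ω, M (N + 1) ω = max 0 (g ω + M N (T ω)) := by
    intro N; induction N with
    | zero =>
      intro ω
      rw [hMsucc, hM0, birkhoffSum_one]
      simp [hM0, max_comm]
    | succ N ih =>
      intro ω
      rw [hMsucc (N + 1) ω, ih ω, birkhoffSum_succ' T g (N + 1) ω, hMsucc N (T ω),
        max_assoc, max_add_add_left]
  -- integrability
  have hgint : Integrable g P := by
    refine Integrable.mono' (integrable_const B) hg.aestronglyMeasurable ?_
    exact Eventually.of_forall fun ω => by simpa [Real.norm_eq_abs] using hB ω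
  have hMint : ∀ N, Integrable (M N) P := by
    intro N
    refine Integrable.mono' (integrable_const ((N : ℝ) * (|B| + 1)))
      (hMmeas N).aestronglyMeasurable ?_
    exact Eventually.of_forall fun ω => by simpa [Real.norm_eq_abs] using hMbd N ω
  have hMTint : ∀ N, Integrable (fun ω => M N (T ω)) P := by
    intro N
    refine Integrable.mono' (integrable_const ((N : ℝ) * (|B| + 1)))
      ((hMmeas N).comp hTm).aestronglyMeasurable ?_
    exact Eventually.of_forall fun ω => by simpa [Real.norm_eq_abs] using hMbd N (T ω)
  -- the increasing events
  set E : ℕ → Set Ω := fun N => {ω | 0 < M (N + 1) ω} with hE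
  have hEmeas : ∀ N, MeasurableSet (E N) := fun N =>
    measurableSet_lt measurable_const (hMmeas (N + 1))
  have hEmono : Monotone E := by
    refine monotone_nat_of_le_succ fun N ω hω => ?_
    exact lt_of_lt_of_le hω (hMmono (N + 1) ω)
  -- Garsia's maximal inequality: ∫_{E N} g ≥ 0
  have hgarsia : ∀ N, 0 ≤ ∫ ω in E N, g ω ∂P := by
    intro N
    have hpt : ∀ ω, M (N + 1) ω - M (N + 1) (T ω) ≤ Set.indicator (E N) g ω := by
      intro ω
      by_cases hω : ω ∈ E N
      · rw [Set.indicator_of_mem hω]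
        have h1 : M (N + 1) ω = g ω + M N (T ω) := by
          have hpos : (0:ℝ) < M (N + 1) ω := hω
          rw [hkey N ω] at hpos ⊢
          rcases max_cases (0:ℝ) (g ω + M N (T ω)) with ⟨h, _⟩ | ⟨h, _⟩
          · exfalso; rw [h] at hpos; exact lt_irrefl _ hpos
          · exact h
        have h2 := hMmono N (T ω)
        linarith
      · rw [Set.indicator_of_notMem hω]
        have h1 : M (N + 1) ω ≤ 0 := not_lt.1 hω
        have h2 : M (N + 1) ω = 0 := le_antisymm h1 (hMnonneg (N + 1) ω)
        have h3 := hMnonneg (N + 1) (T ω)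
        linarith
    have hint : ∫ ω, (M (N + 1) ω - M (N + 1) (T ω)) ∂P = 0 := by
      rw [integral_sub (hMint (N + 1)) (hMTint (N + 1))]
      have : ∫ ω, M (N + 1) (T ω) ∂P = ∫ ω, M (N + 1) ω ∂P := by
        rw [← integral_map hTm.aemeasurable (hMmeas (N + 1)).aestronglyMeasurable, hT.map_eq]
      rw [this, sub_self]
    have hindint : Integrable (Set.indicator (E N) g) P := hgint.indicator (hEmeas N)
    have hmono := integral_mono (f := fun ω => M (N + 1) ω - M (N + 1) (T ω))
      (g := Set.indicator (E N) g) ((hMint (N + 1)).sub (hMTint (N + 1))) hindint hpt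
    rw [hint] at hmono
    rwa [integral_indicator (hEmeas N)] at hmono
  -- pass to the limit
  have hlim : Tendsto (fun N => ∫ ω in E N, g ω ∂P) atTop (𝓝 (∫ ω in ⋃ N, E N, g ω ∂P)) :=
    tendsto_setIntegral_of_monotone hEmeas hEmono hgint.integrableOn
  have hUnion : 0 ≤ ∫ ω in ⋃ N, E N, g ω ∂P :=
    le_of_tendsto_of_tendsto tendsto_const_nhds hlim (Eventually.of_forall hgarsia)
  -- conclude
  set G : Set Ω := {ω | ∀ n : ℕ, birkhoffSum T g (n + 1) ω ≤ 0} with hG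
  have hGmeas : MeasurableSet G := by
    have : G = ⋂ n, {ω | birkhoffSum T g (n + 1) ω ≤ 0} := by ext ω; simp [hG, Set.mem_iInter]
    rw [this]
    exact MeasurableSet.iInter fun n => measurableSet_le (hSmeas (n + 1)) measurable_const
  have hGcompl : Gᶜ = ⋃ N, E N := by
    ext ω
    simp only [hG, Set.mem_compl_iff, Set.mem_setOf_eq, not_forall, Set.mem_iUnion, hE]
    constructor
    · rintro ⟨n, hn⟩
      refine ⟨n, ?_⟩
      have : birkhoffSum T g (n + 1) ω ≤ M (n + 1) ω := by
        rw [hMsucc]; exact le_max_right _ _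
      exact lt_of_lt_of_le (not_le.1 hn) this
    · rintro ⟨N, hN⟩
      by_contra hcon
      push_neg at hcon
      have hall : ∀ K, M K ω ≤ 0 := by
        intro K; induction K with
        | zero => simp [hM0]
        | succ K ih => rw [hMsucc]; exact max_le ih (hcon K)
      exact absurd hN (not_lt.2 (hall (N + 1)))
  by_contra hcon
  push_neg at hcon
  have hG0 : P G = 0 := le_antisymm (by simpa using hcon) (zero_le)
  have heq : ∫ ω in ⋃ N, E N, g ω ∂P = ∫ ω, g ω ∂P := by
    rw [← hGcompl]
    have h1 : ∫ ω, g ω ∂P = ∫ ω in G, g ω ∂P + ∫ ω in Gᶜ, g ω ∂P :=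
      (integral_add_compl hGmeas hgint).symm
    have h2 : ∫ ω in G, g ω ∂P = 0 := by
      rw [Measure.restrict_eq_zero.mpr hG0, integral_zero_measure]
    linarith
  rw [heq] at hUnion
  linarith

/-- Along each fixed direction `q`, the limsup of the normalized increments is a.s. at
most `ε`, for every `ε > 0`. -/
lemma key (d : ℕ)
    {Ω : Type*} [MeasurableSpace Ω] (P : Measure Ω) [IsProbabilityMeasure P]
    (τ : Ed d → Ω → Ω)
    (hτmeas : ∀ y : Ed d, Measurable (τ y))
    (hτmp : ∀ y : Ed d, MeasurePreserving (τ y) P P)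
    (hτgrp : ∀ x y : Ed d, τ (x + y) = τ x ∘ τ y)
    (hτzero : τ 0 = id)
    (hτerg : ∀ A : Set Ω, MeasurableSet A → (∀ z : Ed d, τ z ⁻¹' A = A) → P A = 0 ∨ P A = 1)
    (w : Ed d → Ω → ℝ)
    (hwmeas : Measurable fun x : Ed d × Ω => w x.1 x.2)
    (C : ℝ≥0)
    (hwlip : ∀ ω : Ω, LipschitzWith C (fun y => w y ω))
    (hstat : ∀ (x y z : Ed d) (ω : Ω), w x (τ z ω) - w y (τ z ω) = w (x + z) ω - w (y + z) ω)
    (hmean : ∀ x : Ed d, ∫ ω, (w x ω - w 0 ω) ∂P = 0)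
    (q : Ed d) (ε : ℝ) (hε : 0 < ε) :
    ∀ᵐ ω ∂P, limsup (fun n : ℕ => (w ((n : ℝ) • q) ω - w 0 ω) / n) atTop ≤ ε := by
  have hwm : ∀ x : Ed d, Measurable fun ω => w x ω := fun x =>
    hwmeas.comp (measurable_const.prodMk measurable_id)
  have hlipabs : ∀ (ω : Ω) (x y : Ed d), |w x ω - w y ω| ≤ (C : ℝ) * ‖x - y‖ := fun ω x y => by
    simpa [Real.dist_eq, dist_eq_norm] using (hwlip ω).dist_le_mul x y
  -- uniform bound on the sequence
  have hbd : ∀ (ω : Ω) (n : ℕ), |(w ((n : ℝ) • q) ω - w 0 ω) / n| ≤ (C : ℝ) * ‖q‖ :=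
    fun ω n => seqbd d (fun y => w y ω) (C : ℝ) C.coe_nonneg (hlipabs ω) q n
  set L : Ω → ℝ := fun ω => limsup (fun n : ℕ => (w ((n : ℝ) • q) ω - w 0 ω) / n) atTop with hLdef
  show ∀ᵐ ω ∂P, L ω ≤ ε
  have hLmeas : Measurable L :=
    Measurable.limsup fun n => ((hwm _).sub (hwm 0)).div_const _
  -- invariance of L under the whole group
  have hLinv : ∀ (z : Ed d) (ω : Ω), L (τ z ω) = L ω := by
    intro z ω
    refine limsup_congr_of_sub (B := (C : ℝ) * ‖q‖) (fun n => hbd (τ z ω) n) (fun n => hbd ω n) ?_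
    have hsq : ∀ n : ℕ, |((w ((n : ℝ) • q) (τ z ω) - w 0 (τ z ω)) / n
        - (w ((n : ℝ) • q) ω - w 0 ω) / n)| ≤ (2 * (C : ℝ) * ‖z‖) / n := by
      intro n
      rcases Nat.eq_zero_or_pos n with hn | hn
      · subst hn; simp
      · have hn' : (0 : ℝ) < n := by exact_mod_cast hn
        have hnum : |w ((n : ℝ) • q) (τ z ω) - w 0 (τ z ω) - (w ((n : ℝ) • q) ω - w 0 ω)|
            ≤ 2 * (C : ℝ) * ‖z‖ := by
          have h1 := hstat ((n : ℝ) • q) 0 z ω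
          rw [h1, zero_add]
          have h2 : w ((n : ℝ) • q + z) ω - w z ω - (w ((n : ℝ) • q) ω - w 0 ω)
              = (w ((n : ℝ) • q + z) ω - w ((n : ℝ) • q) ω) + (w 0 ω - w z ω) := by ring
          rw [h2]
          calc |(w ((n : ℝ) • q + z) ω - w ((n : ℝ) • q) ω) + (w 0 ω - w z ω)|
              ≤ |w ((n : ℝ) • q + z) ω - w ((n : ℝ) • q) ω| + |w 0 ω - w z ω| := abs_add_le _ _
            _ ≤ (C : ℝ) * ‖(n : ℝ) • q + z - (n : ℝ) • q‖ + (C : ℝ) * ‖(0 : Ed d) - z‖ :=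
                add_le_add (hlipabs ω _ _) (hlipabs ω _ _)
            _ = 2 * (C : ℝ) * ‖z‖ := by
                rw [add_sub_cancel_left, zero_sub, norm_neg]; ring
        rw [div_sub_div_same, abs_div, abs_of_pos hn']
        gcongr
    refine squeeze_zero_norm hsq ?_
    exact tendsto_const_div_atTop_nhds_zero_nat _
  -- the invariant event
  set A : Set Ω := {ω | ε < L ω} with hA
  have hAmeas : MeasurableSet A := measurableSet_lt measurable_const hLmeas
  have hAinv : ∀ z : Ed d, τ z ⁻¹' A = A := by
    intro z; ext ω
    simp only [Set.mem_preimage, hA, Set.mem_setOf_eq, hLinv z ω]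
  rcases hτerg A hAmeas hAinv with h0 | h1
  · rw [ae_iff]
    convert h0 using 2
    ext ω
    simp [hA, not_le]
  · exfalso
    -- Birkhoff sums along direction q
    set F : Ω → ℝ := fun ω => w q ω - w 0 ω with hF
    have hiter : ∀ n : ℕ, (τ q)^[n] = τ ((n : ℝ) • q) := by
      intro n; induction n with
      | zero => simp [hτzero]
      | succ n ih =>
        rw [Function.iterate_succ', ih, ← hτgrp]
        push_cast
        rw [add_smul, one_smul, add_comm]
    have hS : ∀ (n : ℕ) (ω : Ω), birkhoffSum (τ q) F n ω = w ((n : ℝ) • q) ω - w 0 ω := by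
      intro n; induction n with
      | zero => intro ω; simp [birkhoffSum_zero]
      | succ n ih =>
        intro ω
        rw [birkhoffSum_succ, ih, hiter n]
        have h1 : F (τ ((n : ℝ) • q) ω)
            = w (((n + 1 : ℕ) : ℝ) • q) ω - w ((n : ℝ) • q) ω := by
          have hst := hstat q 0 ((n : ℝ) • q) ω
          rw [zero_add] at hst
          have hcast : q + (n : ℝ) • q = ((n + 1 : ℕ) : ℝ) • q := by
            push_cast
            rw [add_smul, one_smul, add_comm]
          rw [hF]
          simp only []
          rw [hst, hcast]
        rw [h1]
        ring
    set g : Ω → ℝ := fun ω => F ω - ε with hg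
    have hFmeas : Measurable F := (hwm q).sub (hwm 0)
    have hFbd : ∀ ω, |F ω| ≤ (C : ℝ) * ‖q‖ := fun ω => by
      simpa using hlipabs ω q 0
    have hFint : Integrable F P := by
      refine Integrable.mono' (integrable_const ((C : ℝ) * ‖q‖)) hFmeas.aestronglyMeasurable ?_
      exact Eventually.of_forall fun ω => by simpa [Real.norm_eq_abs] using hFbd ω
    have hgneg : ∫ ω, g ω ∂P < 0 := by
      have heq : ∫ ω, g ω ∂P = ∫ ω, F ω ∂P - ε := by
        rw [hg]
        simp only []
        rw [integral_sub hFint (integrable_const ε), integral_const]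
        simp
      have hm : ∫ ω, F ω ∂P = 0 := hmean q
      rw [heq, hm]
      linarith
    have hgbd : ∀ ω, |g ω| ≤ (C : ℝ) * ‖q‖ + ε := by
      intro ω
      have h := abs_le.1 (hFbd ω)
      rw [hg]
      simp only []
      rw [abs_le]
      constructor <;> [linarith [h.1]; linarith [h.2]]
    have hpos := lemA P (τ q) (hτmeas q) (hτmp q) g (hFmeas.sub measurable_const)
      ((C : ℝ) * ‖q‖ + ε) hgbd hgneg
    have hgsum : ∀ (m : ℕ) (ω : Ω), birkhoffSum (τ q) g m ω
        = birkhoffSum (τ q) F m ω - m * ε := by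
      intro m ω
      unfold birkhoffSum
      rw [hg]
      simp only []
      rw [Finset.sum_sub_distrib, Finset.sum_const, Finset.card_range, nsmul_eq_mul]
    have hGsub : {ω | ∀ n : ℕ, birkhoffSum (τ q) g (n + 1) ω ≤ 0} ⊆ Aᶜ := by
      intro ω hω
      simp only [Set.mem_compl_iff, hA, Set.mem_setOf_eq, not_lt]
      refine limsup_le_of_le ((bddL (hbd ω)).isCoboundedUnder_le) ?_
      refine eventually_atTop.2 ⟨1, fun n hn => ?_⟩
      have hn' : (0 : ℝ) < n := by exact_mod_cast hn
      obtain ⟨m, rfl⟩ := Nat.exists_eq_succ_of_ne_zero (Nat.pos_iff_ne_zero.1 hn)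
      have h := hω m
      rw [hgsum, hS] at h
      rw [div_le_iff₀ hn']
      push_cast at h ⊢
      linarith
    have hAc : P Aᶜ = 0 := by
      rw [measure_compl hAmeas (measure_ne_top P A), h1, measure_univ, tsub_self]
    have hle := measure_mono (μ := P) hGsub
    rw [hAc] at hle
    exact absurd (le_antisymm hle zero_le) (ne_of_gt hpos)

set_option maxHeartbeats 1000000 in
/-- Deterministic step: a Lipschitz function vanishing at `0` that is sublinear along the
integer multiples of each point of a dense sequence is sublinear at infinity. -/
lemma det (d : ℕ) (f : Ed d → ℝ) (C : ℝ) (hC : 0 ≤ C)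
    (hL : ∀ x y : Ed d, |f x - f y| ≤ C * ‖x - y‖) (hf0 : f 0 = 0)
    (u : ℕ → Ed d) (hu : DenseRange u)
    (h : ∀ k, Tendsto (fun n : ℕ => f ((n : ℝ) • u k) / n) atTop (𝓝 0)) :
    Tendsto (fun y : Ed d => f y / ‖y‖) (cobounded (Ed d)) (𝓝 0) := by
  rw [NormedAddCommGroup.tendsto_nhds_zero]
  intro ε hε
  set δ : ℝ := min 1 (ε / (2 * (C + 1))) with hδdef
  have hδpos : 0 < δ := lt_min one_pos (by positivity)
  have hδ1 : δ ≤ 1 := min_le_left _ _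
  have hδε : δ * (C + 1) ≤ ε / 2 := by
    have h1 : δ ≤ ε / (2 * (C + 1)) := min_le_right _ _
    have h2 : (0:ℝ) < C + 1 := by linarith
    calc δ * (C + 1) ≤ ε / (2 * (C + 1)) * (C + 1) := by nlinarith
      _ = ε / 2 := by field_simp
  -- finite δ-net of the unit sphere from the dense sequence
  have hcov : Metric.sphere (0 : Ed d) 1 ⊆ ⋃ k, Metric.ball (u k) δ := by
    intro e _
    rcases Metric.denseRange_iff.1 hu e δ hδpos with ⟨k, hk⟩
    exact Set.mem_iUnion.2 ⟨k, by simpa [Metric.mem_ball, dist_comm] using hk⟩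
  obtain ⟨t, ht⟩ := (isCompact_sphere (0 : Ed d) 1).elim_finite_subcover
    (fun k => Metric.ball (u k) δ) (fun k => Metric.isOpen_ball) hcov
  -- choose N so that |f (n • u k)| ≤ δ n for all k ∈ t, n ≥ N
  have hN : ∀ k ∈ t, ∃ N : ℕ, ∀ n ≥ N, |f ((n : ℝ) • u k)| ≤ δ * n := by
    intro k _
    have hev := (h k).eventually (Metric.ball_mem_nhds (0:ℝ) hδpos)
    rw [eventually_atTop] at hev
    obtain ⟨N, hN⟩ := hev
    refine ⟨N + 1, fun n hn => ?_⟩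
    have hn1 : 1 ≤ n := le_trans (Nat.le_add_left 1 N) hn
    have hn' : (0:ℝ) < n := by exact_mod_cast hn1
    have hd := hN n (le_trans (Nat.le_succ N) hn)
    rw [Real.dist_eq, sub_zero, abs_div, abs_of_pos hn'] at hd
    exact le_of_lt ((div_lt_iff₀ hn').1 hd)
  choose! N hNspec using hN
  set N₀ : ℕ := t.sup N with hN₀
  set R : ℝ := max ((N₀ : ℝ) + 2) ((4 * C + 4) / ε + 1) with hR
  filter_upwards [eventually_cobounded_le_norm R] with y hy
  have hR1 : (1:ℝ) ≤ R :=
    le_trans (by linarith [Nat.cast_nonneg (α := ℝ) N₀] : (1:ℝ) ≤ (N₀ : ℝ) + 2) (le_max_left _ _)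
  have hynorm : (1:ℝ) ≤ ‖y‖ := le_trans hR1 hy
  have hypos : (0:ℝ) < ‖y‖ := lt_of_lt_of_le one_pos hynorm
  -- the direction of y and a nearby net point
  set e : Ed d := ‖y‖⁻¹ • y with he
  have hesph : e ∈ Metric.sphere (0 : Ed d) 1 := by
    simp only [mem_sphere_iff_norm, sub_zero, he, norm_smul, norm_inv, norm_norm]
    field_simp
  obtain ⟨k, hkt, hke⟩ : ∃ k ∈ t, e ∈ Metric.ball (u k) δ := by
    have := ht hesph
    simpa using this
  have hkdist : ‖e - u k‖ < δ := by rwa [Metric.mem_ball, dist_eq_norm] at hke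
  have huk : ‖u k‖ ≤ 2 := by
    have h1 : ‖u k‖ ≤ ‖e‖ + ‖e - u k‖ := by
      have heq : u k = e - (e - u k) := by abel
      calc ‖u k‖ = ‖e - (e - u k)‖ := by rw [← heq]
        _ ≤ ‖e‖ + ‖e - u k‖ := norm_sub_le _ _
    have h2 : ‖e‖ = 1 := by simpa [mem_sphere_iff_norm, sub_zero] using hesph
    linarith [hkdist, hδ1]
  set n : ℕ := ⌊‖y‖⌋₊ with hn
  have hnle : (n : ℝ) ≤ ‖y‖ := Nat.floor_le (le_of_lt hypos)
  have hngt : ‖y‖ < n + 1 := Nat.lt_floor_add_one _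
  have hnN : N k ≤ n := by
    have h1 : ((N₀ : ℝ) + 2) ≤ ‖y‖ := le_trans (le_max_left _ _) hy
    have h2 : (N₀ : ℝ) ≤ n := by linarith
    have h3 : N₀ ≤ n := by exact_mod_cast h2
    exact le_trans (Finset.le_sup hkt) h3
  have hfn : |f ((n : ℝ) • u k)| ≤ δ * n := hNspec k hkt n hnN
  -- Lipschitz comparison
  have hdist : ‖y - (n : ℝ) • u k‖ ≤ ‖y‖ * δ + 2 := by
    have hy_eq : y = ‖y‖ • e := by
      rw [he, smul_smul, mul_inv_cancel₀ (ne_of_gt hypos), one_smul]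
    have h1 : ‖y - (n : ℝ) • u k‖ ≤ ‖y - ‖y‖ • u k‖ + ‖(‖y‖ - n) • u k‖ := by
      have heq : y - (n : ℝ) • u k = (y - ‖y‖ • u k) + (‖y‖ - n) • u k := by
        rw [sub_smul]; abel
      rw [heq]
      exact norm_add_le _ _
    have h2 : ‖y - ‖y‖ • u k‖ ≤ ‖y‖ * δ := by
      calc ‖y - ‖y‖ • u k‖ = ‖‖y‖ • (e - u k)‖ := by rw [smul_sub, ← hy_eq]
        _ = ‖y‖ * ‖e - u k‖ := by rw [norm_smul, Real.norm_eq_abs, abs_of_pos hypos]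
        _ ≤ ‖y‖ * δ := by nlinarith [hkdist, norm_nonneg (e - u k)]
    have h3 : ‖(‖y‖ - n) • u k‖ ≤ 2 := by
      rw [norm_smul, Real.norm_eq_abs, abs_of_nonneg (by linarith : (0:ℝ) ≤ ‖y‖ - n)]
      have h31 : ‖y‖ - (n:ℝ) ≤ 1 := by linarith
      have h32 : (0:ℝ) ≤ ‖y‖ - n := by linarith
      nlinarith [norm_nonneg (u k), huk]
    linarith
  have hfy : |f y| ≤ ε / 2 * ‖y‖ + (2 * C + 2) := by
    have h1 : |f y - f ((n : ℝ) • u k)| ≤ C * ‖y - (n : ℝ) • u k‖ := hL _ _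
    have h2 : |f y| ≤ |f ((n : ℝ) • u k)| + C * ‖y - (n : ℝ) • u k‖ := by
      have := abs_sub_abs_le_abs_sub (f y) (f ((n : ℝ) • u k))
      linarith
    have h3 : C * ‖y - (n : ℝ) • u k‖ ≤ C * (‖y‖ * δ + 2) :=
      mul_le_mul_of_nonneg_left hdist hC
    have h4 : δ * n ≤ δ * ‖y‖ := by nlinarith
    have h5 : |f y| ≤ δ * ‖y‖ + C * ‖y‖ * δ + 2 * C := by nlinarith
    nlinarith [hδε, hypos]
  -- conclude
  rw [Real.norm_eq_abs, abs_div, abs_of_pos hypos, div_lt_iff₀ hypos]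
  have hy2 : (4 * C + 4) / ε + 1 ≤ ‖y‖ := le_trans (le_max_right _ _) hy
  have h7 : (4 * C + 4) / ε < ‖y‖ := by linarith
  have h8 : 4 * C + 4 < ε * ‖y‖ := by
    rw [div_lt_iff₀ hε] at h7
    linarith [mul_comm ‖y‖ ε]
  nlinarith [hfy]

/-- Kozlov's lemma: a jointly measurable function, Lipschitz in its first
variable uniformly in ω, with stationary and mean-zero increments, is almost surely
strictly sublinear at infinity. -/
theorem statement_4
    (d : ℕ) (hd : 0 < d)
    {Ω : Type*} [MeasurableSpace Ω] (P : Measure Ω) [IsProbabilityMeasure P]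
    (τ : Ed d → Ω → Ω)
    (hτmeas : ∀ y : Ed d, Measurable (τ y))
    (hτmp : ∀ y : Ed d, MeasurePreserving (τ y) P P)
    (hτgrp : ∀ x y : Ed d, τ (x + y) = τ x ∘ τ y)
    (hτzero : τ 0 = id)
    (hτerg : ∀ A : Set Ω, MeasurableSet A → (∀ z : Ed d, τ z ⁻¹' A = A) → P A = 0 ∨ P A = 1)
    (w : Ed d → Ω → ℝ)
    (hwmeas : Measurable fun x : Ed d × Ω => w x.1 x.2)
    (C : ℝ≥0)
    (hwlip : ∀ ω : Ω, LipschitzWith C (fun y => w y ω))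
    (hstat : ∀ (x y z : Ed d) (ω : Ω), w x (τ z ω) - w y (τ z ω) = w (x + z) ω - w (y + z) ω)
    (hmean : ∀ x : Ed d, ∫ ω, (w x ω - w 0 ω) ∂P = 0) :
    ∀ᵐ ω ∂P, Tendsto (fun y : Ed d => w y ω / ‖y‖) (cobounded (Ed d)) (𝓝 0) := by
  have hwm : ∀ x : Ed d, Measurable fun ω => w x ω := fun x =>
    hwmeas.comp (measurable_const.prodMk measurable_id)
  have hlipabs : ∀ (ω : Ω) (x y : Ed d), |w x ω - w y ω| ≤ (C : ℝ) * ‖x - y‖ := fun ω x y => by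
    simpa [Real.dist_eq, dist_eq_norm] using (hwlip ω).dist_le_mul x y
  -- the negated field also satisfies all hypotheses
  set w' : Ed d → Ω → ℝ := fun x ω => -(w x ω) with hw'
  have hwmeas' : Measurable fun x : Ed d × Ω => w' x.1 x.2 := hwmeas.neg
  have hwlip' : ∀ ω : Ω, LipschitzWith C (fun y => w' y ω) := fun ω => (hwlip ω).neg
  have hstat' : ∀ (x y z : Ed d) (ω : Ω),
      w' x (τ z ω) - w' y (τ z ω) = w' (x + z) ω - w' (y + z) ω := by
    intro x y z ω
    have := hstat x y z ω
    simp only [hw']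
    linarith
  have hmean' : ∀ x : Ed d, ∫ ω, (w' x ω - w' 0 ω) ∂P = 0 := by
    intro x
    have heq : (fun ω => w' x ω - w' 0 ω) = fun ω => -(w x ω - w 0 ω) := by
      funext ω; simp only [hw']; ring
    rw [heq, integral_neg, hmean x, neg_zero]
  -- a dense sequence of directions
  have hsep : DenseRange (TopologicalSpace.denseSeq (Ed d)) :=
    TopologicalSpace.denseRange_denseSeq (Ed d)
  set u : ℕ → Ed d := TopologicalSpace.denseSeq (Ed d) with hu
  -- almost sure event
  have hae : ∀ᵐ ω ∂P, ∀ (k m : ℕ),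
      limsup (fun n : ℕ => (w ((n : ℝ) • u k) ω - w 0 ω) / n) atTop ≤ 1 / ((m : ℝ) + 1) ∧
      limsup (fun n : ℕ => (w' ((n : ℝ) • u k) ω - w' 0 ω) / n) atTop ≤ 1 / ((m : ℝ) + 1) := by
    rw [ae_all_iff]
    intro k
    rw [ae_all_iff]
    intro m
    have hm : (0:ℝ) < 1 / ((m : ℝ) + 1) := by positivity
    exact (key d P τ hτmeas hτmp hτgrp hτzero hτerg w hwmeas C hwlip hstat hmean
        (u k) _ hm).and
      (key d P τ hτmeas hτmp hτgrp hτzero hτerg w' hwmeas' C hwlip' hstat' hmean'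
        (u k) _ hm)
  filter_upwards [hae] with ω hω
  -- for each direction, the normalized increments tend to 0
  have htend : ∀ k, Tendsto (fun n : ℕ => (w ((n : ℝ) • u k) ω - w 0 ω) / n) atTop (𝓝 0) := by
    intro k
    set a : ℕ → ℝ := fun n => (w ((n : ℝ) • u k) ω - w 0 ω) / n with ha
    have hbda : ∀ n, |a n| ≤ (C : ℝ) * ‖u k‖ := fun n =>
      seqbd d (fun y => w y ω) (C : ℝ) C.coe_nonneg (hlipabs ω) (u k) n
    have hup : limsup a atTop ≤ 0 := by
      refine le_of_forall_pos_le_add fun η hη => ?_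
      obtain ⟨m, hm⟩ := exists_nat_one_div_lt hη
      have := (hω k m).1
      rw [zero_add]
      exact le_trans this (le_of_lt (by exact_mod_cast hm))
    have hneg : (fun n : ℕ => (w' ((n : ℝ) • u k) ω - w' 0 ω) / n) = fun n => -(a n) := by
      funext n
      simp only [hw', ha]
      ring
    have hdown : limsup (fun n => -(a n)) atTop ≤ 0 := by
      rw [← hneg]
      refine le_of_forall_pos_le_add fun η hη => ?_
      obtain ⟨m, hm⟩ := exists_nat_one_div_lt hη
      have := (hω k m).2
      rw [zero_add]
      exact le_trans this (le_of_lt (by exact_mod_cast hm))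
    rw [NormedAddCommGroup.tendsto_nhds_zero]
    intro η hη
    have hbdna : ∀ n, |(-(a ·)) n| ≤ (C : ℝ) * ‖u k‖ := fun n => by
      simpa using hbda n
    have ev1 : ∀ᶠ n in atTop, a n < η :=
      eventually_lt_of_limsup_lt (lt_of_le_of_lt hup hη) (bddU hbda)
    have ev2 : ∀ᶠ n in atTop, -(a n) < η := by
      have := eventually_lt_of_limsup_lt (lt_of_le_of_lt hdown hη) (bddU hbdna)
      simpa using this
    filter_upwards [ev1, ev2] with n h1 h2
    rw [Real.norm_eq_abs, abs_lt]
    exact ⟨by linarith, h1⟩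
  -- apply the deterministic lemma to f = w(·, ω) - w(0, ω)
  have hdet : Tendsto (fun y : Ed d => (w y ω - w 0 ω) / ‖y‖) (cobounded (Ed d)) (𝓝 0) := by
    refine det d (fun y => w y ω - w 0 ω) (C : ℝ) C.coe_nonneg ?_ (by simp) u hsep ?_
    · intro x y
      have heq : w x ω - w 0 ω - (w y ω - w 0 ω) = w x ω - w y ω := by ring
      rw [heq]
      exact hlipabs ω x y
    · exact htend
  -- the constant term also dies
  have hconst : Tendsto (fun y : Ed d => w 0 ω / ‖y‖) (cobounded (Ed d)) (𝓝 0) := by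
    have h1 : Tendsto (fun y : Ed d => ‖y‖) (cobounded (Ed d)) atTop :=
      tendsto_norm_cobounded_atTop
    have h2 : Tendsto (fun y : Ed d => ‖y‖⁻¹) (cobounded (Ed d)) (𝓝 0) :=
      h1.inv_tendsto_atTop
    have h3 := h2.const_mul (w 0 ω)
    simpa [div_eq_mul_inv, mul_zero] using h3
  have heq : (fun y : Ed d => w y ω / ‖y‖)
      = fun y : Ed d => (w y ω - w 0 ω) / ‖y‖ + w 0 ω / ‖y‖ := by
    funext y
    rw [← add_div]
    ring_nf
  rw [heq]
  simpa using hdet.add hconst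
end
end

section
/- Each of the functions H̄₊, H̄₋ and Ĥ is continuous and coercive on ℝ^d (tends to +∞ as |p| → ∞) and satisfies F((p+q)/2) ≤ Λ(F(p), F(q)) for all p, q ∈ ℝ^d, where F denotes the function in question. Moreover, for every p ∈ ℝ^d: H̄* ≤ min{H̄₊(p), H̄₋(p)} ≤ Ĥ(p) ≤ sup_{y ∈ ℝ^d} H(p,y) < ∞. -/
open MeasureTheory Filter Topology Bornology
open scoped RealInnerProductSpace NNReal

noncomputable section

/-- The set 𝓛 of globally Lipschitz real-valued functions on ℝ^d. -/
def LipFuns (d : ℕ) : Set (Ed d → ℝ) := {w | ∃ C : ℝ≥0, LipschitzWith C w}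

/-- SL⁺ : Lipschitz functions sublinear from below, i.e. liminf_{|y|→∞} w(y)/|y| ≥ 0. -/
def SLplus (d : ℕ) : Set (Ed d → ℝ) :=
  {w | w ∈ LipFuns d ∧ ∀ ε : ℝ, 0 < ε → ∃ R : ℝ, ∀ y : Ed d, R ≤ ‖y‖ → -ε ≤ w y / ‖y‖}

/-- SL⁻ : Lipschitz functions sublinear from above, i.e. limsup_{|y|→∞} w(y)/|y| ≤ 0. -/
def SLminus (d : ℕ) : Set (Ed d → ℝ) :=
  {w | w ∈ LipFuns d ∧ ∀ ε : ℝ, 0 < ε → ∃ R : ℝ, ∀ y : Ed d, R ≤ ‖y‖ → w y / ‖y‖ ≤ ε}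

/-- 𝓢 : Lipschitz functions strictly sublinear at infinity. -/
def Scal (d : ℕ) : Set (Ed d → ℝ) := SLplus d ∩ SLminus d

/-- H̄₊(p) = inf_{w ∈ SL⁺} esssup_y H(p + Dw(y), y). -/
def HbarPlus (d : ℕ) (H : Ed d → Ed d → ℝ) (p : Ed d) : ℝ :=
  sInf {t | ∃ w ∈ SLplus d, t = essSup (fun y => H (p + gradient w y) y) volume}

/-- H̄₋(p) = inf_{w ∈ SL⁻} esssup_y H(p + Dw(y), y). -/
def HbarMinus (d : ℕ) (H : Ed d → Ed d → ℝ) (p : Ed d) : ℝ :=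
  sInf {t | ∃ w ∈ SLminus d, t = essSup (fun y => H (p + gradient w y) y) volume}

/-- Ĥ(p) = inf_{w ∈ 𝓢} esssup_y H(p + Dw(y), y). -/
def Hhat (d : ℕ) (H : Ed d → Ed d → ℝ) (p : Ed d) : ℝ :=
  sInf {t | ∃ w ∈ Scal d, t = essSup (fun y => H (p + gradient w y) y) volume}

/-- H̄* = inf_{w ∈ 𝓛} esssup_y H(Dw(y), y). -/
def Hstar (d : ℕ) (H : Ed d → Ed d → ℝ) : ℝ :=
  sInf {t | ∃ w ∈ LipFuns d, t = essSup (fun y => H (gradient w y) y) volume}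

/-- m_μ(y,x) = sup { w(y) − w(x) : w ∈ 𝓛, H(Dw,z) ≤ μ a.e. }. -/
def mMu (d : ℕ) (H : Ed d → Ed d → ℝ) (μ : ℝ) (y x : Ed d) : ℝ :=
  sSup {t | ∃ w ∈ LipFuns d, (∀ᵐ z ∂volume, H (gradient w z) z ≤ μ) ∧ t = w y - w x}

/-- Viscosity subsolution of F(Du, y) ≤ μ in U. -/
def ViscSub (d : ℕ) (F : Ed d → Ed d → ℝ) (μ : ℝ) (U : Set (Ed d)) (u : Ed d → ℝ) : Prop :=
  ∀ (φ : Ed d → ℝ) (x₀ : Ed d), x₀ ∈ U → ContDiffAt ℝ 1 φ x₀ →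
    IsLocalMaxOn (fun y => u y - φ y) U x₀ → F (gradient φ x₀) x₀ ≤ μ

/-- Viscosity supersolution of F(Dv, y) ≥ μ in U. -/
def ViscSuper (d : ℕ) (F : Ed d → Ed d → ℝ) (μ : ℝ) (U : Set (Ed d)) (v : Ed d → ℝ) : Prop :=
  ∀ (φ : Ed d → ℝ) (x₀ : Ed d), x₀ ∈ U → ContDiffAt ℝ 1 φ x₀ →
    IsLocalMinOn (fun y => v y - φ y) U x₀ → μ ≤ F (gradient φ x₀) x₀ 


section Helpers
variable {d : ℕ}

lemma vol_ne_zero (hd : 0 < d) : (volume : Measure (Ed d)) ≠ 0 := by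
  intro h
  have : (volume : Measure (Ed d)) (Metric.ball 0 1) ≠ 0 :=
    (Metric.isOpen_ball.measure_pos volume (Metric.nonempty_ball.2 one_pos)).ne'
  rw [h] at this; simp at this

lemma ae_neBot' (hd : 0 < d) : (ae (volume : Measure (Ed d))).NeBot :=
  MeasureTheory.ae_neBot.2 (vol_ne_zero hd)

lemma grad_norm_le {C : ℝ≥0} {w : Ed d → ℝ} (hw : LipschitzWith C w) (y : Ed d) :
    ‖gradient w y‖ ≤ C := by
  by_cases h : DifferentiableAt ℝ w y
  · rw [gradient, LinearIsometryEquiv.norm_map]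
    exact norm_fderiv_le_of_lipschitz ℝ hw
  · simp [gradient_eq_zero_of_not_differentiableAt h]

lemma grad_meas (w : Ed d → ℝ) : Measurable (fun y : Ed d => gradient w y) := by
  have h1 : Measurable (fderiv ℝ w) := measurable_fderiv (𝕜 := ℝ) (f := w)
  have h2 : Continuous (fun L : Ed d →L[ℝ] ℝ => (InnerProductSpace.toDual ℝ (Ed d)).symm L) := by
    continuity
  exact h2.measurable.comp h1

lemma gradient_neg (w : Ed d → ℝ) (y : Ed d) :
    gradient (fun z => -(w z)) y = - gradient w y := by
  have : gradient (fun z => -(w z)) y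
      = (InnerProductSpace.toDual ℝ (Ed d)).symm (fderiv ℝ (fun z => -(w z)) y) := rfl
  rw [this, fderiv_fun_neg, map_neg]; rfl

lemma fderiv_apply_eq_inner_grad {w : Ed d → ℝ} {y : Ed d} (h : DifferentiableAt ℝ w y)
    (v : Ed d) : fderiv ℝ w y v = ⟪gradient w y, v⟫ := by
  have h2 : HasFDerivAt w (InnerProductSpace.toDual ℝ (Ed d) (gradient w y)) y :=
    hasGradientAt_iff_hasFDerivAt.1 h.hasGradientAt
  rw [h2.fderiv]
  exact InnerProductSpace.toDual_apply_apply

lemma essSup_le_of_ae_le_R (hd : 0 < d) {f : Ed d → ℝ} {c B : ℝ} (hB : ∀ y, B ≤ f y)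
    (h : ∀ᵐ y ∂(volume : Measure (Ed d)), f y ≤ c) : essSup f volume ≤ c := by
  haveI := ae_neBot' hd
  exact limsup_le_of_le (isCoboundedUnder_le_of_le _ (fun y => hB y)) h

lemma le_essSup_of_ae_le_R (hd : 0 < d) {f : Ed d → ℝ} {c M : ℝ} (hM : ∀ y, f y ≤ M)
    (h : ∀ᵐ y ∂(volume : Measure (Ed d)), c ≤ f y) : c ≤ essSup f volume := by
  haveI := ae_neBot' hd
  refine le_limsup_of_le (isBoundedUnder_of ⟨M, hM⟩) (fun b hb => ?_)
  obtain ⟨x, h1, h2⟩ := (hb.and h).exists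
  exact h2.trans h1

lemma ae_le_essSup_R {f : Ed d → ℝ} {M : ℝ} (hM : ∀ y, f y ≤ M) :
    ∀ᵐ y ∂(volume : Measure (Ed d)), f y ≤ essSup f volume :=
  ae_le_essSup (isBoundedUnder_of ⟨M, hM⟩)

lemma ae_lt_of_essSup_lt_R {f : Ed d → ℝ} {M c : ℝ} (hM : ∀ y, f y ≤ M)
    (h : essSup f volume < c) : ∀ᵐ y ∂(volume : Measure (Ed d)), f y < c :=
  ae_lt_of_essSup_lt h (isBoundedUnder_of ⟨M, hM⟩)

lemma ae_translate {P : Ed d → Prop} (hP : MeasurableSet {z | P z})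
    (h : ∀ᵐ z ∂(volume : Measure (Ed d)), P z) (v : Ed d) :
    ∀ᵐ x ∂(volume : Measure (Ed d)), P (x + v) := by
  have hmp := measurePreserving_add_right (volume : Measure (Ed d)) v
  rw [← hmp.map_eq] at h
  exact (MeasureTheory.ae_map_iff hmp.measurable.aemeasurable hP).1 h

lemma meas_grad_inner_le (w : Ed d → ℝ) (e : Ed d) (c : ℝ) :
    MeasurableSet {z : Ed d | ⟪e, gradient w z⟫ ≤ c} :=
  measurableSet_le (measurable_const.inner (grad_meas w)) measurable_const

lemma key_decay (hd : 0 < d) {C : ℝ≥0} {w : Ed d → ℝ} (hw : LipschitzWith C w)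
    (e : Ed d) {c : ℝ} (hc : 0 < c)
    (hgrad : ∀ᵐ y ∂(volume : Measure (Ed d)), ⟪e, gradient w y⟫ ≤ -c)
    {T : ℝ} (hT : 0 < T) :
    ∃ x : Ed d, ‖x‖ ≤ 1 ∧ w (x + T • e) - w x ≤ -(c * T) / 2 := by
  classical
  set B : Set (Ed d) := Metric.closedBall 0 1 with hB
  have hBcompact : IsCompact B := isCompact_closedBall 0 1
  have hBmeas : MeasurableSet B := measurableSet_closedBall
  have hvol_lt : (volume : Measure (Ed d)) B < ⊤ := measure_closedBall_lt_top
  set V : ℝ := ((volume : Measure (Ed d)) B).toReal with hV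
  have hVpos : 0 < V := ENNReal.toReal_pos
    (Metric.measure_closedBall_pos volume (0 : Ed d) one_pos).ne' hvol_lt.ne
  -- integrability of translates
  have hint : ∀ t : ℝ, IntegrableOn (fun x => w (x + t • e)) B (volume : Measure (Ed d)) := by
    intro t
    exact (hw.continuous.comp (continuous_id.add continuous_const)).continuousOn.integrableOn_compact
      hBcompact
  set g : ℝ → ℝ := fun t => ∫ x in B, w (x + t • e) with hgdef
  -- a.e. good set
  have hgood : ∀ v : Ed d, ∀ᵐ x ∂(volume : Measure (Ed d)),
      DifferentiableAt ℝ w (x + v) ∧ ⟪e, gradient w (x + v)⟫ ≤ -c := by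
    intro v
    refine ae_translate ?_ (hw.ae_differentiableAt.and hgrad) v
    exact (measurableSet_of_differentiableAt ℝ w).inter (meas_grad_inner_le w e (-c))
  -- derivative of g
  have hderiv : ∀ t₀ : ℝ,
      Integrable (fun x => ⟪e, gradient w (x + t₀ • e)⟫) (volume.restrict B) ∧
      HasDerivAt g (∫ x in B, ⟪e, gradient w (x + t₀ • e)⟫) t₀ := by
    intro t₀
    have hlip : ∀ x : Ed d, LipschitzWith (Real.nnabs ((C : ℝ) * ‖e‖)) (fun t : ℝ => w (x + t • e)) := by
      intro x
      refine LipschitzWith.of_dist_le_mul (fun t s => ?_)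
      have h1 : dist (w (x + t • e)) (w (x + s • e)) ≤ C * dist (x + t • e) (x + s • e) :=
        hw.dist_le_mul _ _
      have h2 : dist (x + t • e) (x + s • e) = ‖e‖ * dist t s := by
        rw [dist_add_left, dist_eq_norm, ← sub_smul, norm_smul, Real.norm_eq_abs,
          ← Real.dist_eq, mul_comm]
      have h3 : (Real.nnabs ((C : ℝ) * ‖e‖) : ℝ) = (C : ℝ) * ‖e‖ := by
        rw [Real.coe_nnabs, abs_of_nonneg (by positivity)]
      rw [h3]
      calc dist (w (x + t • e)) (w (x + s • e)) ≤ (C : ℝ) * (‖e‖ * dist t s) := by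
            rw [← h2]; exact h1
        _ = (C : ℝ) * ‖e‖ * dist t s := by ring
    refine hasDerivAt_integral_of_dominated_loc_of_lip (s := Set.univ) Filter.univ_mem
      (Eventually.of_forall (fun t =>
        ((hw.continuous.comp (continuous_id.add continuous_const)).aestronglyMeasurable)))
      (hint t₀)
      ((measurable_const.inner ((grad_meas w).comp (measurable_id.add_const (t₀ • e)))).aestronglyMeasurable)
      (Eventually.of_forall (fun x => (hlip x).lipschitzOnWith))
      ((integrableOn_const hvol_lt.ne))
      ?_
    · refine ae_restrict_of_ae ((hgood (t₀ • e)).mono (fun x hx => ?_))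
      have hline : HasDerivAt (fun t : ℝ => x + t • e) e t₀ := by
        simpa using ((hasDerivAt_id t₀).smul_const e).const_add x
      have h5 := (hx.1.hasFDerivAt).comp_hasDerivAt t₀ hline
      rw [fderiv_apply_eq_inner_grad hx.1 e] at h5
      rw [real_inner_comm]
      exact h5
  -- bound on the derivative
  have hdle : ∀ t₀ : ℝ, (∫ x in B, ⟪e, gradient w (x + t₀ • e)⟫) ≤ -c * V := by
    intro t₀
    have hae : ∀ᵐ x ∂(volume.restrict B), ⟪e, gradient w (x + t₀ • e)⟫ ≤ -c :=
      ae_restrict_of_ae ((hgood (t₀ • e)).mono (fun x hx => hx.2))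
    calc (∫ x in B, ⟪e, gradient w (x + t₀ • e)⟫)
        ≤ ∫ _x in B, (-c) := integral_mono_ae (hderiv t₀).1 (integrableOn_const hvol_lt.ne) hae
      _ = -c * V := by rw [setIntegral_const]; simp [hV, mul_comm, Measure.real]
  -- monotonicity
  have hphi : ∀ t : ℝ, HasDerivAt (fun t => g t + c * V * t) ((∫ x in B, ⟪e, gradient w (x + t • e)⟫) + c * V) t := by
    intro t
    have := ((hderiv t).2).fun_add ((hasDerivAt_id t).const_mul (c * V))
    simpa using this
  have hanti : Antitone (fun t => g t + c * V * t) := by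
    refine antitone_of_deriv_nonpos (fun t => (hphi t).differentiableAt) (fun t => ?_)
    rw [(hphi t).deriv]
    have := hdle t
    nlinarith
  have hkey : g T - g 0 ≤ -(c * V * T) := by
    have := hanti (le_of_lt hT : (0:ℝ) ≤ T)
    simp only [mul_zero, add_zero] at this
    linarith
  -- conclude by contradiction
  by_contra hcon
  push_neg at hcon
  have hlow : ∀ x ∈ B, -(c * T) / 2 ≤ w (x + T • e) - w x := by
    intro x hx
    have hx1 : ‖x‖ ≤ 1 := by simpa [hB, Metric.mem_closedBall, dist_zero_right] using hx
    exact le_of_lt (hcon x hx1)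
  have hsub : IntegrableOn (fun x => w (x + T • e) - w x) B (volume : Measure (Ed d)) := by
    have h0 : IntegrableOn (fun x : Ed d => w x) B volume := by
      simpa using hint 0
    exact (hint T).sub h0
  have hint2 : (-(c * T) / 2) * V ≤ ∫ x in B, (w (x + T • e) - w x) := by
    have := setIntegral_mono_on (integrableOn_const hvol_lt.ne) hsub hBmeas hlow
    calc (-(c * T) / 2) * V = ∫ _x in B, (-(c * T) / 2) := by
          rw [setIntegral_const]; simp [hV, mul_comm, Measure.real]
      _ ≤ _ := this
  have heq : (∫ x in B, (w (x + T • e) - w x)) = g T - g 0 := by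
    have h0 : IntegrableOn (fun x : Ed d => w x) B volume := by simpa using hint 0
    rw [integral_sub (hint T) h0]
    have : g 0 = ∫ x in B, w x := by simp [hgdef]
    rw [this]
  rw [heq] at hint2
  nlinarith [mul_pos (mul_pos hc hT) hVpos]

end Helpers

section Classes
variable {d : ℕ}

lemma zero_mem_LipFuns : (fun _ : Ed d => (0:ℝ)) ∈ LipFuns d :=
  ⟨0, LipschitzWith.const' 0⟩

lemma zero_mem_SLplus : (fun _ : Ed d => (0:ℝ)) ∈ SLplus d := by
  refine ⟨zero_mem_LipFuns, fun ε hε => ⟨0, fun y _ => ?_⟩⟩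
  simp [le_of_lt hε]

lemma zero_mem_SLminus : (fun _ : Ed d => (0:ℝ)) ∈ SLminus d := by
  refine ⟨zero_mem_LipFuns, fun ε hε => ⟨0, fun y _ => ?_⟩⟩
  simp [le_of_lt hε]

lemma zero_mem_Scal : (fun _ : Ed d => (0:ℝ)) ∈ Scal d :=
  ⟨zero_mem_SLplus, zero_mem_SLminus⟩

lemma mid_mem_LipFuns {w₁ w₂ : Ed d → ℝ} (h₁ : w₁ ∈ LipFuns d) (h₂ : w₂ ∈ LipFuns d) :
    (fun y => (w₁ y + w₂ y)/2) ∈ LipFuns d := by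
  obtain ⟨C₁, hC₁⟩ := h₁; obtain ⟨C₂, hC₂⟩ := h₂
  refine ⟨C₁ + C₂, LipschitzWith.of_dist_le_mul (fun x y => ?_)⟩
  have e₁ := hC₁.dist_le_mul x y
  have e₂ := hC₂.dist_le_mul x y
  rw [Real.dist_eq] at e₁ e₂
  rw [Real.dist_eq]
  push_cast
  have h3 : |(w₁ x + w₂ x)/2 - (w₁ y + w₂ y)/2| ≤ (|w₁ x - w₁ y| + |w₂ x - w₂ y|)/2 := by
    rw [show (w₁ x + w₂ x)/2 - (w₁ y + w₂ y)/2 = ((w₁ x - w₁ y) + (w₂ x - w₂ y))/2 by ring]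
    rw [abs_div, abs_two]
    exact div_le_div_of_nonneg_right (abs_add_le _ _) (by norm_num)
  have h4 : ((C₁:ℝ)+(C₂:ℝ))*dist x y = (C₁:ℝ)*dist x y + (C₂:ℝ)*dist x y := by ring
  have h5 : 0 ≤ (C₁:ℝ)*dist x y := mul_nonneg C₁.coe_nonneg dist_nonneg
  have h6 : 0 ≤ (C₂:ℝ)*dist x y := mul_nonneg C₂.coe_nonneg dist_nonneg
  linarith

lemma mid_mem_SLplus {w₁ w₂ : Ed d → ℝ} (h₁ : w₁ ∈ SLplus d) (h₂ : w₂ ∈ SLplus d) :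
    (fun y => (w₁ y + w₂ y)/2) ∈ SLplus d := by
  refine ⟨mid_mem_LipFuns h₁.1 h₂.1, fun ε hε => ?_⟩
  obtain ⟨R₁, hR₁⟩ := h₁.2 ε hε
  obtain ⟨R₂, hR₂⟩ := h₂.2 ε hε
  refine ⟨max R₁ R₂, fun y hy => ?_⟩
  have a₁ := hR₁ y ((le_max_left _ _).trans hy)
  have a₂ := hR₂ y ((le_max_right _ _).trans hy)
  have hdiv : (w₁ y + w₂ y)/2/‖y‖ = (w₁ y/‖y‖ + w₂ y/‖y‖)/2 := by
    by_cases h : ‖y‖ = 0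
    · simp [h]
    · field_simp
  rw [hdiv]
  linarith

lemma mid_mem_SLminus {w₁ w₂ : Ed d → ℝ} (h₁ : w₁ ∈ SLminus d) (h₂ : w₂ ∈ SLminus d) :
    (fun y => (w₁ y + w₂ y)/2) ∈ SLminus d := by
  refine ⟨mid_mem_LipFuns h₁.1 h₂.1, fun ε hε => ?_⟩
  obtain ⟨R₁, hR₁⟩ := h₁.2 ε hε
  obtain ⟨R₂, hR₂⟩ := h₂.2 ε hε
  refine ⟨max R₁ R₂, fun y hy => ?_⟩
  have a₁ := hR₁ y ((le_max_left _ _).trans hy)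
  have a₂ := hR₂ y ((le_max_right _ _).trans hy)
  have hdiv : (w₁ y + w₂ y)/2/‖y‖ = (w₁ y/‖y‖ + w₂ y/‖y‖)/2 := by
    by_cases h : ‖y‖ = 0
    · simp [h]
    · field_simp
  rw [hdiv]
  linarith

lemma mid_mem_Scal {w₁ w₂ : Ed d → ℝ} (h₁ : w₁ ∈ Scal d) (h₂ : w₂ ∈ Scal d) :
    (fun y => (w₁ y + w₂ y)/2) ∈ Scal d :=
  ⟨mid_mem_SLplus h₁.1 h₂.1, mid_mem_SLminus h₁.2 h₂.2⟩

lemma no_decay_plus (hd : 0 < d) {w : Ed d → ℝ} (hw : w ∈ SLplus d)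
    {e : Ed d} (he : ‖e‖ = 1) {c : ℝ} (hc : 0 < c)
    (hgrad : ∀ᵐ y ∂(volume : Measure (Ed d)), ⟪e, gradient w y⟫ ≤ -c) : False := by
  obtain ⟨⟨C, hC⟩, hsub⟩ := hw
  obtain ⟨R, hR⟩ := hsub (c/8) (by linarith)
  set A : ℝ := |w 0| + C with hA
  have hA0 : 0 ≤ A := by positivity
  set T : ℝ := max (|R| + 2) ((8*A + 8 + c)/(3*c) + 1) with hTdef
  have hT2 : |R| + 2 ≤ T := le_max_left _ _
  have hT3 : (8*A + 8 + c)/(3*c) + 1 ≤ T := le_max_right _ _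
  have hTpos : 0 < T := lt_of_lt_of_le (by positivity) hT2
  have hRabs : (0:ℝ) ≤ |R| := abs_nonneg R
  obtain ⟨x, hx1, hx2⟩ := key_decay hd hC e hc hgrad hTpos
  set y := x + T • e with hy
  have hTe : ‖T • e‖ = T := by
    rw [norm_smul, he, Real.norm_eq_abs, abs_of_pos hTpos, mul_one]
  have hyn1 : ‖y‖ ≤ T + 1 := by
    calc ‖y‖ ≤ ‖x‖ + ‖T • e‖ := norm_add_le _ _
      _ ≤ 1 + T := by rw [hTe]; linarith
      _ = T + 1 := by ring
  have hyn2 : T - 1 ≤ ‖y‖ := by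
    have h := norm_sub_norm_le (T • e) (x + T • e)
    have h2 : ‖T • e - (x + T • e)‖ = ‖x‖ := by
      rw [show T • e - (x + T • e) = -x by abel, norm_neg]
    rw [h2, hTe] at h
    linarith
  have hypos : 0 < ‖y‖ := by linarith
  have hyR : R ≤ ‖y‖ := by
    have h1 : R ≤ |R| := le_abs_self R
    linarith
  have hwx : w x ≤ w 0 + C := by
    have h1 := hC.dist_le_mul x 0
    rw [Real.dist_eq, dist_zero_right] at h1
    have h2 : w x - w 0 ≤ C * ‖x‖ := (le_abs_self _).trans h1
    have h3 : (C:ℝ) * ‖x‖ ≤ C * 1 := mul_le_mul_of_nonneg_left hx1 C.coe_nonneg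
    linarith
  have hup : w y ≤ A + 1 - c * T / 2 := by
    have h1 : w 0 ≤ |w 0| := le_abs_self _
    have h2 : w y ≤ w x + (-(c * T) / 2) := by linarith [hx2]
    have h3 : 0 ≤ (C:ℝ) := C.coe_nonneg
    simp only [hA]
    linarith
  have hlo : -(c/8) * ‖y‖ ≤ w y := by
    have h1 := hR y hyR
    calc -(c/8) * ‖y‖ ≤ (w y / ‖y‖) * ‖y‖ := mul_le_mul_of_nonneg_right h1 (le_of_lt hypos)
      _ = w y := by field_simp
  have hlo2 : -(c/8) * (T+1) ≤ w y := by
    have h1 : -(c/8) * (T+1) ≤ -(c/8) * ‖y‖ := by nlinarith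
    linarith
  have hq : A + 1 + c/8 < (3*c/8) * T := by
    have h1 : (8*A + 8 + c)/(3*c) < T := by linarith
    have h2 : (3*c/8) * ((8*A + 8 + c)/(3*c)) = A + 1 + c/8 := by
      field_simp
    calc A + 1 + c/8 = (3*c/8) * ((8*A + 8 + c)/(3*c)) := h2.symm
      _ < (3*c/8) * T := by
          apply mul_lt_mul_of_pos_left h1 (by positivity)
  nlinarith

lemma no_decay_minus (hd : 0 < d) {w : Ed d → ℝ} (hw : w ∈ SLminus d)
    {e : Ed d} (he : ‖e‖ = 1) {c : ℝ} (hc : 0 < c)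
    (hgrad : ∀ᵐ y ∂(volume : Measure (Ed d)), ⟪e, gradient w y⟫ ≤ -c) : False := by
  obtain ⟨⟨C, hC⟩, hsub⟩ := hw
  obtain ⟨R, hR⟩ := hsub (c/8) (by linarith)
  set A : ℝ := |w 0| + C with hA
  have hA0 : 0 ≤ A := by positivity
  set T : ℝ := max (|R| + 2) ((8*A + 8 + c)/(3*c) + 1) with hTdef
  have hT2 : |R| + 2 ≤ T := le_max_left _ _
  have hT3 : (8*A + 8 + c)/(3*c) + 1 ≤ T := le_max_right _ _
  have hTpos : 0 < T := lt_of_lt_of_le (by positivity) hT2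
  have hRabs : (0:ℝ) ≤ |R| := abs_nonneg R
  -- apply key_decay to -w and -e
  have hC' : LipschitzWith C (fun z => -(w z)) := by
    refine LipschitzWith.of_dist_le_mul (fun a b => ?_)
    have := hC.dist_le_mul a b
    rw [Real.dist_eq] at this ⊢
    rw [show -(w a) - -(w b) = -(w a - w b) by ring, abs_neg]
    exact this
  have hgrad' : ∀ᵐ z ∂(volume : Measure (Ed d)), ⟪-e, gradient (fun z => -(w z)) z⟫ ≤ -c := by
    refine hgrad.mono (fun z hz => ?_)
    rw [gradient_neg, inner_neg_neg]
    exact hz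
  obtain ⟨x, hx1, hx2⟩ := key_decay hd hC' (-e) hc hgrad' hTpos
  set y := x + T • (-e) with hy
  have hTe : ‖T • (-e)‖ = T := by
    rw [norm_smul, norm_neg, he, Real.norm_eq_abs, abs_of_pos hTpos, mul_one]
  have hyn1 : ‖y‖ ≤ T + 1 := by
    calc ‖y‖ ≤ ‖x‖ + ‖T • (-e)‖ := norm_add_le _ _
      _ ≤ 1 + T := by rw [hTe]; linarith
      _ = T + 1 := by ring
  have hyn2 : T - 1 ≤ ‖y‖ := by
    have h := norm_sub_norm_le (T • (-e)) (x + T • (-e))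
    have h2 : ‖T • (-e) - (x + T • (-e))‖ = ‖x‖ := by
      rw [show T • (-e) - (x + T • (-e)) = -x by abel, norm_neg]
    rw [h2, hTe] at h
    linarith
  have hypos : 0 < ‖y‖ := by linarith
  have hyR : R ≤ ‖y‖ := by
    have h1 : R ≤ |R| := le_abs_self R
    linarith
  have hwx : w 0 - C ≤ w x := by
    have h1 := hC.dist_le_mul x 0
    rw [Real.dist_eq, dist_zero_right] at h1
    have h2 : w 0 - w x ≤ C * ‖x‖ := by
      have := (neg_abs_le (w x - w 0))
      have h4 : -(C * ‖x‖) ≤ w x - w 0 := by linarith [h1, (neg_abs_le (w x - w 0))]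
      linarith
    have h3 : (C:ℝ) * ‖x‖ ≤ C * 1 := mul_le_mul_of_nonneg_left hx1 C.coe_nonneg
    linarith
  -- hx2 : -(w (x + T • (-e))) - (-(w x)) ≤ -(c*T)/2, i.e. w y ≥ w x + cT/2
  have hlow : w x + c * T / 2 ≤ w y := by
    have : -(w y) - (-(w x)) ≤ -(c*T)/2 := hx2
    linarith
  have hup : w y ≤ (c/8) * (T+1) := by
    have h1 := hR y hyR
    have h2 : w y ≤ (c/8) * ‖y‖ := by
      calc w y = (w y / ‖y‖) * ‖y‖ := by field_simp
        _ ≤ (c/8) * ‖y‖ := mul_le_mul_of_nonneg_right h1 (le_of_lt hypos)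
    have h3 : (c/8) * ‖y‖ ≤ (c/8) * (T+1) := by nlinarith
    linarith
  have hlow2 : -A + c * T / 2 ≤ w y := by
    have h1 : -(|w 0|) ≤ w 0 := neg_abs_le _
    have h3 : 0 ≤ (C:ℝ) := C.coe_nonneg
    simp only [hA]
    linarith
  have hq : A + 1 + c/8 < (3*c/8) * T := by
    have h1 : (8*A + 8 + c)/(3*c) < T := by linarith
    have h2 : (3*c/8) * ((8*A + 8 + c)/(3*c)) = A + 1 + c/8 := by
      field_simp
    calc A + 1 + c/8 = (3*c/8) * ((8*A + 8 + c)/(3*c)) := h2.symm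
      _ < (3*c/8) * T := by
          apply mul_lt_mul_of_pos_left h1 (by positivity)
  nlinarith

end Classes


section Machine
variable {d : ℕ} {H : Ed d → Ed d → ℝ}

def genSet (H : Ed d → Ed d → ℝ) (W : Set (Ed d → ℝ)) (p : Ed d) : Set ℝ :=
  {t | ∃ w ∈ W, t = essSup (fun y => H (p + gradient w y) y) volume}

lemma zero_elem_genSet {W : Set (Ed d → ℝ)} (h0 : (fun _ : Ed d => (0:ℝ)) ∈ W) (p : Ed d) :
    essSup (fun y => H p y) (volume : Measure (Ed d)) ∈ genSet H W p := by
  refine ⟨_, h0, ?_⟩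
  congr 1
  funext y
  rw [gradient_fun_const, add_zero]

lemma global_lb
    (hreg_bdd : ∀ R : ℝ, 0 < R → ∃ M : ℝ, ∀ p y : Ed d, ‖p‖ ≤ R → |H p y| ≤ M)
    (hcoer : ∀ M : ℝ, ∃ R : ℝ, ∀ p y : Ed d, R ≤ ‖p‖ → M ≤ H p y) :
    ∃ B : ℝ, ∀ q y : Ed d, B ≤ H q y := by
  obtain ⟨R₀, hR₀⟩ := hcoer 0
  obtain ⟨M₀, hM₀⟩ := hreg_bdd (max R₀ 1) (lt_of_lt_of_le one_pos (le_max_right _ _))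
  refine ⟨min 0 (-M₀), fun q y => ?_⟩
  by_cases h : ‖q‖ ≤ max R₀ 1
  · have h1 : -M₀ ≤ H q y := (abs_le.1 (hM₀ q y h)).1
    exact (min_le_right _ _).trans h1
  · push_neg at h
    have h1 : R₀ ≤ ‖q‖ := (le_max_left _ _).trans h.le
    exact (min_le_left _ _).trans (hR₀ q y h1)

lemma f_bound
    (hreg_bdd : ∀ R : ℝ, 0 < R → ∃ M : ℝ, ∀ p y : Ed d, ‖p‖ ≤ R → |H p y| ≤ M)
    {w : Ed d → ℝ} (hw : w ∈ LipFuns d) (p : Ed d) :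
    ∃ M : ℝ, ∀ y : Ed d, |H (p + gradient w y) y| ≤ M := by
  obtain ⟨C, hC⟩ := hw
  obtain ⟨M, hM⟩ := hreg_bdd (‖p‖ + C + 1) (by positivity)
  refine ⟨M, fun y => hM _ y ?_⟩
  calc ‖p + gradient w y‖ ≤ ‖p‖ + ‖gradient w y‖ := norm_add_le _ _
    _ ≤ ‖p‖ + C := by linarith [grad_norm_le hC y]
    _ ≤ _ := by linarith

lemma genSet_lb (hd : 0 < d) {B : ℝ} (hB : ∀ q y : Ed d, B ≤ H q y)
    (hreg_bdd : ∀ R : ℝ, 0 < R → ∃ M : ℝ, ∀ p y : Ed d, ‖p‖ ≤ R → |H p y| ≤ M)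
    {W : Set (Ed d → ℝ)} (hW : W ⊆ LipFuns d) (p : Ed d)
    {t : ℝ} (ht : t ∈ genSet H W p) : B ≤ t := by
  obtain ⟨w, hw, rfl⟩ := ht
  obtain ⟨M, hM⟩ := f_bound hreg_bdd (hW hw) p
  exact le_essSup_of_ae_le_R hd (fun y => (abs_le.1 (hM y)).2)
    (Eventually.of_forall (fun y => hB _ y))

lemma genSet_bddBelow (hd : 0 < d) {B : ℝ} (hB : ∀ q y : Ed d, B ≤ H q y)
    (hreg_bdd : ∀ R : ℝ, 0 < R → ∃ M : ℝ, ∀ p y : Ed d, ‖p‖ ≤ R → |H p y| ≤ M)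
    {W : Set (Ed d → ℝ)} (hW : W ⊆ LipFuns d) (p : Ed d) :
    BddBelow (genSet H W p) :=
  ⟨B, fun _ ht => genSet_lb hd hB hreg_bdd hW p ht⟩

lemma gen_le_sup (hd : 0 < d) {B : ℝ} (hB : ∀ q y : Ed d, B ≤ H q y)
    (hreg_bdd : ∀ R : ℝ, 0 < R → ∃ M : ℝ, ∀ p y : Ed d, ‖p‖ ≤ R → |H p y| ≤ M)
    {W : Set (Ed d → ℝ)} (hW : W ⊆ LipFuns d)
    (h0 : (fun _ : Ed d => (0:ℝ)) ∈ W) (p : Ed d) {M : ℝ}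
    (hM : ∀ y : Ed d, H p y ≤ M) :
    sInf (genSet H W p) ≤ M := by
  refine (csInf_le (genSet_bddBelow hd hB hreg_bdd hW p) (zero_elem_genSet h0 p)).trans ?_
  exact essSup_le_of_ae_le_R hd (fun y => hB p y) (Eventually.of_forall hM)

/-- key claim for continuity -/
lemma gen_claim (hd : 0 < d)
    (hreg_bdd : ∀ R : ℝ, 0 < R → ∃ M : ℝ, ∀ p y : Ed d, ‖p‖ ≤ R → |H p y| ≤ M)
    (hreg_uc : ∀ R : ℝ, 0 < R → ∀ ε : ℝ, 0 < ε → ∃ δ : ℝ, 0 < δ ∧ ∀ p p' y y' : Ed d,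
      ‖p‖ ≤ R → ‖p'‖ ≤ R → ‖p - p'‖ < δ → ‖y - y'‖ < δ → |H p y - H p' y'| < ε)
    (hcoer : ∀ M : ℝ, ∃ R : ℝ, ∀ p y : Ed d, R ≤ ‖p‖ → M ≤ H p y)
    {W : Set (Ed d → ℝ)} (hW : W ⊆ LipFuns d)
    (h0 : (fun _ : Ed d => (0:ℝ)) ∈ W)
    {K ε : ℝ} (hK : 0 < K) (hε : 0 < ε) (hε1 : ε ≤ 1) :
    ∃ δ : ℝ, 0 < δ ∧ ∀ p₁ p₂ : Ed d, ‖p₁‖ ≤ K → ‖p₂‖ ≤ K → ‖p₁ - p₂‖ < δ →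
      sInf (genSet H W p₂) ≤ sInf (genSet H W p₁) + 2*ε := by
  obtain ⟨B, hB⟩ := global_lb hreg_bdd hcoer
  obtain ⟨M, hM⟩ := hreg_bdd K hK
  obtain ⟨R, hR⟩ := hcoer (M+2)
  set R' : ℝ := max R (K+1) with hR'
  obtain ⟨δ₀, hδ₀pos, hδ₀⟩ := hreg_uc (R'+1) (by positivity) ε hε
  refine ⟨min δ₀ 1, lt_min hδ₀pos one_pos, fun p₁ p₂ hp₁ hp₂ hpp => ?_⟩
  have hne : (genSet H W p₁).Nonempty := ⟨_, zero_elem_genSet h0 p₁⟩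
  have hFle : sInf (genSet H W p₁) ≤ M :=
    gen_le_sup hd hB hreg_bdd hW h0 p₁ (fun y => (abs_le.1 (hM p₁ y hp₁)).2)
  obtain ⟨t, ht, htlt⟩ := exists_lt_of_csInf_lt hne
    (lt_add_of_pos_right (sInf (genSet H W p₁)) hε)
  obtain ⟨w, hw, rfl⟩ := ht
  obtain ⟨Mw, hMw⟩ := f_bound hreg_bdd (hW hw) p₁
  have htM : essSup (fun y => H (p₁ + gradient w y) y) (volume : Measure (Ed d)) ≤ M + 1 := by
    linarith
  have hae := ae_le_essSup_R (fun y => (abs_le.1 (hMw y)).2)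
  have haegood : ∀ᵐ y ∂(volume : Measure (Ed d)),
      H (p₂ + gradient w y) y ≤ H (p₁ + gradient w y) y + ε := by
    refine hae.mono (fun y hy => ?_)
    have h1 : H (p₁ + gradient w y) y < M + 2 := by linarith
    have h2 : ‖p₁ + gradient w y‖ < R' := by
      by_contra hcon
      push_neg at hcon
      have : R ≤ ‖p₁ + gradient w y‖ := (le_max_left _ _).trans hcon
      linarith [hR _ y this]
    have h3 : ‖p₂ + gradient w y‖ ≤ R' + 1 := by
      have : p₂ + gradient w y = (p₁ + gradient w y) + (p₂ - p₁) := by abel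
      rw [this]
      calc ‖(p₁ + gradient w y) + (p₂ - p₁)‖ ≤ ‖p₁ + gradient w y‖ + ‖p₂ - p₁‖ :=
            norm_add_le _ _
        _ ≤ R' + 1 := by
            have h5 : ‖p₂ - p₁‖ < 1 := lt_of_lt_of_le (by rw [norm_sub_rev]; exact hpp) (min_le_right _ _)
            linarith
    have h4 : ‖(p₁ + gradient w y) - (p₂ + gradient w y)‖ < δ₀ := by
      have : (p₁ + gradient w y) - (p₂ + gradient w y) = p₁ - p₂ := by abel
      rw [this]
      exact lt_of_lt_of_le hpp (min_le_left _ _)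
    have h6 := hδ₀ (p₁ + gradient w y) (p₂ + gradient w y) y y
      (le_of_lt (lt_of_lt_of_le h2 (by linarith))) h3 h4 (by simp [hδ₀pos])
    have := (abs_le.1 (le_of_lt h6)).1
    linarith
  have hstep : essSup (fun y => H (p₂ + gradient w y) y) (volume : Measure (Ed d))
      ≤ essSup (fun y => H (p₁ + gradient w y) y) (volume : Measure (Ed d)) + ε := by
    refine essSup_le_of_ae_le_R hd (fun y => hB _ y) ?_
    refine (haegood.and hae).mono (fun y hy => ?_)
    linarith [hy.1, hy.2]
  have hmem : essSup (fun y => H (p₂ + gradient w y) y) (volume : Measure (Ed d))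
      ∈ genSet H W p₂ := ⟨w, hw, rfl⟩
  have := csInf_le (genSet_bddBelow hd hB hreg_bdd hW p₂) hmem
  linarith
lemma gen_cont (hd : 0 < d)
    (hreg_bdd : ∀ R : ℝ, 0 < R → ∃ M : ℝ, ∀ p y : Ed d, ‖p‖ ≤ R → |H p y| ≤ M)
    (hreg_uc : ∀ R : ℝ, 0 < R → ∀ ε : ℝ, 0 < ε → ∃ δ : ℝ, 0 < δ ∧ ∀ p p' y y' : Ed d,
      ‖p‖ ≤ R → ‖p'‖ ≤ R → ‖p - p'‖ < δ → ‖y - y'‖ < δ → |H p y - H p' y'| < ε)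
    (hcoer : ∀ M : ℝ, ∃ R : ℝ, ∀ p y : Ed d, R ≤ ‖p‖ → M ≤ H p y)
    {W : Set (Ed d → ℝ)} (hW : W ⊆ LipFuns d)
    (h0 : (fun _ : Ed d => (0:ℝ)) ∈ W) :
    Continuous (fun p => sInf (genSet H W p)) := by
  rw [Metric.continuous_iff]
  intro p ε hε
  set ε₀ : ℝ := min (ε/5) 1 with hε₀def
  have hε₀pos : 0 < ε₀ := lt_min (by linarith) one_pos
  have hε₀1 : ε₀ ≤ 1 := min_le_right _ _
  obtain ⟨δ, hδpos, hδ⟩ := gen_claim hd hreg_bdd hreg_uc hcoer hW h0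
    (K := ‖p‖ + 1) (by positivity) hε₀pos hε₀1
  refine ⟨min δ 1, lt_min hδpos one_pos, fun p' hp' => ?_⟩
  rw [dist_eq_norm] at hp'
  have h1 : ‖p' - p‖ < 1 := lt_of_lt_of_le hp' (min_le_right _ _)
  have h2 : ‖p' - p‖ < δ := lt_of_lt_of_le hp' (min_le_left _ _)
  have hp'K : ‖p'‖ ≤ ‖p‖ + 1 := by
    calc ‖p'‖ = ‖p + (p' - p)‖ := by congr 1; abel
      _ ≤ ‖p‖ + ‖p' - p‖ := norm_add_le _ _
      _ ≤ ‖p‖ + 1 := by linarith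
  have hpK : ‖p‖ ≤ ‖p‖ + 1 := by linarith
  have hA := hδ p p' hpK hp'K (by rw [norm_sub_rev]; exact h2)
  have hB := hδ p' p hp'K hpK h2
  rw [Real.dist_eq]
  have h5 : ε₀ ≤ ε/5 := min_le_left _ _
  rw [abs_lt]
  constructor <;> nlinarith

lemma gen_coer_plus (hd : 0 < d)
    (hreg_bdd : ∀ R : ℝ, 0 < R → ∃ M : ℝ, ∀ p y : Ed d, ‖p‖ ≤ R → |H p y| ≤ M)
    (hcoer : ∀ M : ℝ, ∃ R : ℝ, ∀ p y : Ed d, R ≤ ‖p‖ → M ≤ H p y)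
    {W : Set (Ed d → ℝ)} (hW : W ⊆ SLplus d)
    (h0 : (fun _ : Ed d => (0:ℝ)) ∈ W) :
    ∀ M : ℝ, ∃ R : ℝ, ∀ p : Ed d, R ≤ ‖p‖ → M ≤ sInf (genSet H W p) := by
  intro M
  obtain ⟨RM, hRM⟩ := hcoer M
  refine ⟨max RM 0 + 1, fun p hp => ?_⟩
  have hW' : W ⊆ LipFuns d := fun w hw => (hW hw).1
  have hp1 : 1 ≤ ‖p‖ := by
    have : (0:ℝ) ≤ max RM 0 := le_max_right _ _
    linarith
  have hpne : p ≠ 0 := by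
    intro h; rw [h, norm_zero] at hp1; linarith
  refine le_csInf ⟨_, zero_elem_genSet h0 p⟩ (fun t ht => ?_)
  obtain ⟨w, hw, rfl⟩ := ht
  by_contra hlt
  push_neg at hlt
  obtain ⟨Mw, hMw⟩ := f_bound hreg_bdd (hW' hw) p
  have hae := ae_lt_of_essSup_lt_R (fun y => (abs_le.1 (hMw y)).2) hlt
  set c : ℝ := ‖p‖ - max RM 0 with hcdef
  have hcpos : 0 < c := by simp only [hcdef]; linarith
  set e : Ed d := ‖p‖⁻¹ • p with hedef
  have he : ‖e‖ = 1 := norm_smul_inv_norm hpne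
  have hgrad : ∀ᵐ y ∂(volume : Measure (Ed d)), ⟪e, gradient w y⟫ ≤ -c := by
    refine hae.mono (fun y hy => ?_)
    have hn : ‖p + gradient w y‖ ≤ max RM 0 := by
      by_contra hcon
      push_neg at hcon
      have h1 : RM ≤ ‖p + gradient w y‖ := (le_max_left _ _).trans hcon.le
      linarith [hRM _ y h1]
    have h1 : ⟪e, p + gradient w y⟫ ≤ max RM 0 := by
      calc ⟪e, p + gradient w y⟫ ≤ ‖e‖ * ‖p + gradient w y‖ := real_inner_le_norm _ _
        _ = ‖p + gradient w y‖ := by rw [he, one_mul]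
        _ ≤ _ := hn
    have h2 : ⟪e, p⟫ = ‖p‖ := by
      rw [hedef, real_inner_smul_left, real_inner_self_eq_norm_mul_norm]
      have : ‖p‖ ≠ 0 := by linarith
      field_simp
    have h3 : ⟪e, gradient w y⟫ = ⟪e, p + gradient w y⟫ - ⟪e, p⟫ := by
      rw [inner_add_right]; ring
    rw [h3, h2]
    simp only [hcdef]
    linarith
  exact absurd (no_decay_plus hd (hW hw) he hcpos hgrad) not_false

lemma gen_coer_minus (hd : 0 < d)
    (hreg_bdd : ∀ R : ℝ, 0 < R → ∃ M : ℝ, ∀ p y : Ed d, ‖p‖ ≤ R → |H p y| ≤ M)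
    (hcoer : ∀ M : ℝ, ∃ R : ℝ, ∀ p y : Ed d, R ≤ ‖p‖ → M ≤ H p y)
    {W : Set (Ed d → ℝ)} (hW : W ⊆ SLminus d)
    (h0 : (fun _ : Ed d => (0:ℝ)) ∈ W) :
    ∀ M : ℝ, ∃ R : ℝ, ∀ p : Ed d, R ≤ ‖p‖ → M ≤ sInf (genSet H W p) := by
  intro M
  obtain ⟨RM, hRM⟩ := hcoer M
  refine ⟨max RM 0 + 1, fun p hp => ?_⟩
  have hW' : W ⊆ LipFuns d := fun w hw => (hW hw).1
  have hp1 : 1 ≤ ‖p‖ := by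
    have : (0:ℝ) ≤ max RM 0 := le_max_right _ _
    linarith
  have hpne : p ≠ 0 := by
    intro h; rw [h, norm_zero] at hp1; linarith
  refine le_csInf ⟨_, zero_elem_genSet h0 p⟩ (fun t ht => ?_)
  obtain ⟨w, hw, rfl⟩ := ht
  by_contra hlt
  push_neg at hlt
  obtain ⟨Mw, hMw⟩ := f_bound hreg_bdd (hW' hw) p
  have hae := ae_lt_of_essSup_lt_R (fun y => (abs_le.1 (hMw y)).2) hlt
  set c : ℝ := ‖p‖ - max RM 0 with hcdef
  have hcpos : 0 < c := by simp only [hcdef]; linarith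
  set e : Ed d := ‖p‖⁻¹ • p with hedef
  have he : ‖e‖ = 1 := norm_smul_inv_norm hpne
  have hgrad : ∀ᵐ y ∂(volume : Measure (Ed d)), ⟪e, gradient w y⟫ ≤ -c := by
    refine hae.mono (fun y hy => ?_)
    have hn : ‖p + gradient w y‖ ≤ max RM 0 := by
      by_contra hcon
      push_neg at hcon
      have h1 : RM ≤ ‖p + gradient w y‖ := (le_max_left _ _).trans hcon.le
      linarith [hRM _ y h1]
    have h1 : ⟪e, p + gradient w y⟫ ≤ max RM 0 := by
      calc ⟪e, p + gradient w y⟫ ≤ ‖e‖ * ‖p + gradient w y‖ := real_inner_le_norm _ _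
        _ = ‖p + gradient w y‖ := by rw [he, one_mul]
        _ ≤ _ := hn
    have h2 : ⟪e, p⟫ = ‖p‖ := by
      rw [hedef, real_inner_smul_left, real_inner_self_eq_norm_mul_norm]
      have : ‖p‖ ≠ 0 := by linarith
      field_simp
    have h3 : ⟪e, gradient w y⟫ = ⟪e, p + gradient w y⟫ - ⟪e, p⟫ := by
      rw [inner_add_right]; ring
    rw [h3, h2]
    simp only [hcdef]
    linarith
  exact absurd (no_decay_minus hd (hW hw) he hcpos hgrad) not_false

lemma grad_mid {w₁ w₂ : Ed d → ℝ} {y : Ed d}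
    (h₁ : DifferentiableAt ℝ w₁ y) (h₂ : DifferentiableAt ℝ w₂ y) :
    gradient (fun z => (w₁ z + w₂ z)/2) y = (1/2:ℝ) • (gradient w₁ y + gradient w₂ y) := by
  have hG1 : HasFDerivAt w₁ (InnerProductSpace.toDual ℝ (Ed d) (gradient w₁ y)) y :=
    hasGradientAt_iff_hasFDerivAt.1 h₁.hasGradientAt
  have hG2 : HasFDerivAt w₂ (InnerProductSpace.toDual ℝ (Ed d) (gradient w₂ y)) y :=
    hasGradientAt_iff_hasFDerivAt.1 h₂.hasGradientAt
  have hsum := (hG1.add hG2).const_smul (1/2:ℝ)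
  have heq : (fun z => (w₁ z + w₂ z)/2) = (fun z => (1/2:ℝ) • (w₁ z + w₂ z)) := by
    funext z; rw [smul_eq_mul]; ring
  have hGrad : HasGradientAt (fun z => (w₁ z + w₂ z)/2)
      ((1/2:ℝ) • (gradient w₁ y + gradient w₂ y)) y := by
    apply hasGradientAt_iff_hasFDerivAt.2
    rw [heq, _root_.map_smul, map_add]
    exact hsum
  exact hGrad.gradient

lemma gen_mid (hd : 0 < d)
    (hreg_bdd : ∀ R : ℝ, 0 < R → ∃ M : ℝ, ∀ p y : Ed d, ‖p‖ ≤ R → |H p y| ≤ M)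
    (hcoer : ∀ M : ℝ, ∃ R : ℝ, ∀ p y : Ed d, R ≤ ‖p‖ → M ≤ H p y)
    (Λ : ℝ → ℝ → ℝ)
    (hΛcont : Continuous fun m : ℝ × ℝ => Λ m.1 m.2)
    (hΛmono : ∀ a b a' b' : ℝ, a ≤ a' → b ≤ b' → Λ a b ≤ Λ a' b')
    (hsqc : ∀ p q y : Ed d, H ((1/2 : ℝ) • (p + q)) y ≤ Λ (H p y) (H q y))
    {W : Set (Ed d → ℝ)} (hW : W ⊆ LipFuns d)
    (h0 : (fun _ : Ed d => (0:ℝ)) ∈ W)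
    (hmid : ∀ w₁ ∈ W, ∀ w₂ ∈ W, (fun y => (w₁ y + w₂ y)/2) ∈ W)
    (p q : Ed d) :
    sInf (genSet H W ((1/2:ℝ) • (p + q))) ≤ Λ (sInf (genSet H W p)) (sInf (genSet H W q)) := by
  obtain ⟨B, hB⟩ := global_lb hreg_bdd hcoer
  have key : ∀ η : ℝ, 0 < η → sInf (genSet H W ((1/2:ℝ) • (p + q)))
      ≤ Λ (sInf (genSet H W p) + η) (sInf (genSet H W q) + η) := by
    intro η hη
    obtain ⟨t₁, ht₁, h₁lt⟩ := exists_lt_of_csInf_lt ⟨_, zero_elem_genSet h0 p⟩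
      (lt_add_of_pos_right (sInf (genSet H W p)) hη)
    obtain ⟨t₂, ht₂, h₂lt⟩ := exists_lt_of_csInf_lt ⟨_, zero_elem_genSet h0 q⟩
      (lt_add_of_pos_right (sInf (genSet H W q)) hη)
    obtain ⟨w₁, hw₁, rfl⟩ := ht₁
    obtain ⟨w₂, hw₂, rfl⟩ := ht₂
    obtain ⟨C₁, hC₁⟩ := hW hw₁
    obtain ⟨C₂, hC₂⟩ := hW hw₂
    obtain ⟨M₁, hM₁⟩ := f_bound hreg_bdd (hW hw₁) p
    obtain ⟨M₂, hM₂⟩ := f_bound hreg_bdd (hW hw₂) q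
    have hstep : ∀ᵐ y ∂(volume : Measure (Ed d)),
        H ((1/2:ℝ) • (p + q) + gradient (fun z => (w₁ z + w₂ z)/2) y) y
          ≤ Λ (essSup (fun y => H (p + gradient w₁ y) y) (volume : Measure (Ed d)))
              (essSup (fun y => H (q + gradient w₂ y) y) (volume : Measure (Ed d))) := by
      filter_upwards [hC₁.ae_differentiableAt, hC₂.ae_differentiableAt,
        ae_le_essSup_R (fun y => (abs_le.1 (hM₁ y)).2),
        ae_le_essSup_R (fun y => (abs_le.1 (hM₂ y)).2)] with y hy₁ hy₂ hb₁ hb₂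
      rw [grad_mid hy₁ hy₂]
      have hvec : (1/2:ℝ) • (p + q) + (1/2:ℝ) • (gradient w₁ y + gradient w₂ y)
          = (1/2:ℝ) • ((p + gradient w₁ y) + (q + gradient w₂ y)) := by
        rw [← smul_add]; congr 1; abel
      rw [hvec]
      exact (hsqc _ _ y).trans (hΛmono _ _ _ _ hb₁ hb₂)
    have hess : essSup (fun y => H ((1/2:ℝ) • (p + q) + gradient (fun z => (w₁ z + w₂ z)/2) y) y)
        (volume : Measure (Ed d))
        ≤ Λ (essSup (fun y => H (p + gradient w₁ y) y) (volume : Measure (Ed d)))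
            (essSup (fun y => H (q + gradient w₂ y) y) (volume : Measure (Ed d))) :=
      essSup_le_of_ae_le_R hd (fun y => hB _ y) hstep
    have hmem : essSup (fun y => H ((1/2:ℝ) • (p + q) + gradient (fun z => (w₁ z + w₂ z)/2) y) y)
        (volume : Measure (Ed d)) ∈ genSet H W ((1/2:ℝ) • (p + q)) :=
      ⟨_, hmid w₁ hw₁ w₂ hw₂, rfl⟩
    calc sInf (genSet H W ((1/2:ℝ) • (p + q)))
        ≤ _ := csInf_le (genSet_bddBelow hd hB hreg_bdd hW _) hmem
      _ ≤ _ := hess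
      _ ≤ Λ (sInf (genSet H W p) + η) (sInf (genSet H W q) + η) :=
          hΛmono _ _ _ _ h₁lt.le h₂lt.le
  have hcont : Tendsto (fun η : ℝ => Λ (sInf (genSet H W p) + η) (sInf (genSet H W q) + η))
      (𝓝[>] (0:ℝ)) (𝓝 (Λ (sInf (genSet H W p)) (sInf (genSet H W q)))) := by
    have h1 : Continuous (fun η : ℝ => Λ (sInf (genSet H W p) + η) (sInf (genSet H W q) + η)) :=
      hΛcont.comp ((continuous_const.add continuous_id).prodMk (continuous_const.add continuous_id))
    have h2 := h1.tendsto 0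
    simp only [add_zero] at h2
    exact h2.mono_left nhdsWithin_le_nhds
  refine ge_of_tendsto hcont ?_
  filter_upwards [self_mem_nhdsWithin] with η hη
  exact key η hη

lemma Hstar_le_gen (hd : 0 < d) {B : ℝ} (hB : ∀ q y : Ed d, B ≤ H q y)
    (hreg_bdd : ∀ R : ℝ, 0 < R → ∃ M : ℝ, ∀ p y : Ed d, ‖p‖ ≤ R → |H p y| ≤ M)
    {W : Set (Ed d → ℝ)} (hW : W ⊆ LipFuns d)
    (h0 : (fun _ : Ed d => (0:ℝ)) ∈ W) (p : Ed d) :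
    Hstar d H ≤ sInf (genSet H W p) := by
  refine le_csInf ⟨_, zero_elem_genSet h0 p⟩ (fun t ht => ?_)
  obtain ⟨w, hw, rfl⟩ := ht
  obtain ⟨C, hC⟩ := hW hw
  set w' : Ed d → ℝ := fun y => ⟪p, y⟫ + w y with hw'def
  have hw'lip : w' ∈ LipFuns d := by
    refine ⟨‖p‖₊ + C, ?_⟩
    have hip : LipschitzWith ‖p‖₊ (fun y : Ed d => ⟪p, y⟫) := by
      refine LipschitzWith.of_dist_le_mul (fun a b => ?_)
      rw [Real.dist_eq, ← inner_sub_right]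
      calc |⟪p, a - b⟫| ≤ ‖p‖ * ‖a - b‖ := abs_real_inner_le_norm _ _
        _ = (‖p‖₊ : ℝ) * dist a b := by rw [dist_eq_norm, coe_nnnorm]
    exact hip.add hC
  have haegrad : ∀ᵐ y ∂(volume : Measure (Ed d)), gradient w' y = p + gradient w y := by
    filter_upwards [hC.ae_differentiableAt] with y hy
    have hG : HasFDerivAt w (InnerProductSpace.toDual ℝ (Ed d) (gradient w y)) y :=
      hasGradientAt_iff_hasFDerivAt.1 hy.hasGradientAt
    have hip : HasFDerivAt (fun z : Ed d => ⟪p, z⟫) (InnerProductSpace.toDual ℝ (Ed d) p) y := by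
      have h2 := (InnerProductSpace.toDual ℝ (Ed d) p).hasFDerivAt (x := y)
      have h3 : (fun z : Ed d => ⟪p, z⟫) = ⇑(InnerProductSpace.toDual ℝ (Ed d) p) := by
        funext z; exact (InnerProductSpace.toDual_apply_apply).symm
      rw [h3]
      exact h2
    have hsum := hip.add hG
    have hGrad : HasGradientAt w' (p + gradient w y) y := by
      apply hasGradientAt_iff_hasFDerivAt.2
      rw [map_add]
      exact hsum
    exact hGrad.gradient
  have hess : essSup (fun y => H (gradient w' y) y) (volume : Measure (Ed d))
      = essSup (fun y => H (p + gradient w y) y) (volume : Measure (Ed d)) := by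
    apply essSup_congr_ae
    filter_upwards [haegrad] with y hy
    rw [hy]
  have hbdd : BddBelow {t | ∃ v ∈ LipFuns d,
      t = essSup (fun y => H (gradient v y) y) (volume : Measure (Ed d))} := by
    refine ⟨B, fun t ht => ?_⟩
    obtain ⟨v, hv, rfl⟩ := ht
    obtain ⟨Cv, hCv⟩ := hv
    obtain ⟨Mv, hMv⟩ := hreg_bdd ((Cv:ℝ) + 1) (by positivity)
    refine le_essSup_of_ae_le_R hd (M := Mv) (fun y => ?_)
      (Eventually.of_forall (fun y => hB _ y))
    refine (abs_le.1 (hMv _ y ?_)).2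
    linarith [grad_norm_le hCv y]
  have hmem : essSup (fun y => H (gradient w' y) y) (volume : Measure (Ed d))
      ∈ {t | ∃ v ∈ LipFuns d,
        t = essSup (fun y => H (gradient v y) y) (volume : Measure (Ed d))} :=
    ⟨w', hw'lip, rfl⟩
  calc Hstar d H ≤ essSup (fun y => H (gradient w' y) y) (volume : Measure (Ed d)) :=
        csInf_le hbdd hmem
    _ = _ := hess

end Machine


/-- basic properties of H̄₊, H̄₋, Ĥ and the chain of inequalities. -/
theorem statement_6
    (d : ℕ) (hd : 0 < d)
    (H : Ed d → Ed d → ℝ)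
    (hHcont : Continuous fun q : Ed d × Ed d => H q.1 q.2)
    (hreg_bdd : ∀ R : ℝ, 0 < R → ∃ M : ℝ, ∀ p y : Ed d, ‖p‖ ≤ R → |H p y| ≤ M)
    (hreg_uc : ∀ R : ℝ, 0 < R → ∀ ε : ℝ, 0 < ε → ∃ δ : ℝ, 0 < δ ∧ ∀ p p' y y' : Ed d,
      ‖p‖ ≤ R → ‖p'‖ ≤ R → ‖p - p'‖ < δ → ‖y - y'‖ < δ → |H p y - H p' y'| < ε)
    (hcoer : ∀ M : ℝ, ∃ R : ℝ, ∀ p y : Ed d, R ≤ ‖p‖ → M ≤ H p y)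
    (hqc : ∀ p q y : Ed d, H ((1/2 : ℝ) • (p + q)) y ≤ max (H p y) (H q y))
    (Λ : ℝ → ℝ → ℝ)
    (hΛcont : Continuous fun m : ℝ × ℝ => Λ m.1 m.2)
    (hΛmono : ∀ a b a' b' : ℝ, a ≤ a' → b ≤ b' → Λ a b ≤ Λ a' b')
    (hΛstrict : ∀ a b : ℝ, a ≠ b → Λ a b < max a b)
    (hsqc : ∀ p q y : Ed d, H ((1/2 : ℝ) • (p + q)) y ≤ Λ (H p y) (H q y))
    :
    (Continuous (HbarPlus d H) ∧
      (∀ M : ℝ, ∃ R : ℝ, ∀ p : Ed d, R ≤ ‖p‖ → M ≤ HbarPlus d H p) ∧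
      (∀ p q : Ed d, HbarPlus d H ((1/2 : ℝ) • (p + q)) ≤ Λ (HbarPlus d H p) (HbarPlus d H q))) ∧
    (Continuous (HbarMinus d H) ∧
      (∀ M : ℝ, ∃ R : ℝ, ∀ p : Ed d, R ≤ ‖p‖ → M ≤ HbarMinus d H p) ∧
      (∀ p q : Ed d, HbarMinus d H ((1/2 : ℝ) • (p + q)) ≤ Λ (HbarMinus d H p) (HbarMinus d H q))) ∧
    (Continuous (Hhat d H) ∧
      (∀ M : ℝ, ∃ R : ℝ, ∀ p : Ed d, R ≤ ‖p‖ → M ≤ Hhat d H p) ∧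
      (∀ p q : Ed d, Hhat d H ((1/2 : ℝ) • (p + q)) ≤ Λ (Hhat d H p) (Hhat d H q))) ∧
    (∀ p : Ed d,
      Hstar d H ≤ min (HbarPlus d H p) (HbarMinus d H p) ∧
      min (HbarPlus d H p) (HbarMinus d H p) ≤ Hhat d H p ∧
      BddAbove (Set.range fun y : Ed d => H p y) ∧
      Hhat d H p ≤ sSup (Set.range fun y : Ed d => H p y)) := by
  obtain ⟨B, hB⟩ := global_lb hreg_bdd hcoer
  have hWp : SLplus d ⊆ LipFuns d := fun w hw => hw.1
  have hWm : SLminus d ⊆ LipFuns d := fun w hw => hw.1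
  have hWs : Scal d ⊆ LipFuns d := fun w hw => hw.1.1
  have hWsp : Scal d ⊆ SLplus d := fun w hw => hw.1
  refine ⟨⟨?_, ?_, ?_⟩, ⟨?_, ?_, ?_⟩, ⟨?_, ?_, ?_⟩, ?_⟩
  · exact gen_cont hd hreg_bdd hreg_uc hcoer hWp zero_mem_SLplus
  · exact gen_coer_plus hd hreg_bdd hcoer subset_rfl zero_mem_SLplus
  · exact fun p q => gen_mid hd hreg_bdd hcoer Λ hΛcont hΛmono hsqc hWp zero_mem_SLplus
      (fun w₁ h₁ w₂ h₂ => mid_mem_SLplus h₁ h₂) p q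
  · exact gen_cont hd hreg_bdd hreg_uc hcoer hWm zero_mem_SLminus
  · exact gen_coer_minus hd hreg_bdd hcoer subset_rfl zero_mem_SLminus
  · exact fun p q => gen_mid hd hreg_bdd hcoer Λ hΛcont hΛmono hsqc hWm zero_mem_SLminus
      (fun w₁ h₁ w₂ h₂ => mid_mem_SLminus h₁ h₂) p q
  · exact gen_cont hd hreg_bdd hreg_uc hcoer hWs zero_mem_Scal
  · exact gen_coer_plus hd hreg_bdd hcoer hWsp zero_mem_Scal
  · exact fun p q => gen_mid hd hreg_bdd hcoer Λ hΛcont hΛmono hsqc hWs zero_mem_Scal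
      (fun w₁ h₁ w₂ h₂ => mid_mem_Scal h₁ h₂) p q
  · intro p
    have hbAbove : BddAbove (Set.range fun y : Ed d => H p y) := by
      obtain ⟨M, hM⟩ := hreg_bdd (‖p‖ + 1) (by positivity)
      refine ⟨M, fun t ht => ?_⟩
      obtain ⟨y, rfl⟩ := ht
      exact (abs_le.1 (hM p y (by linarith))).2
    refine ⟨?_, ?_, hbAbove, ?_⟩
    · exact le_min (Hstar_le_gen hd hB hreg_bdd hWp zero_mem_SLplus p)
        (Hstar_le_gen hd hB hreg_bdd hWm zero_mem_SLminus p)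
    · refine (min_le_left _ _).trans ?_
      refine csInf_le_csInf (genSet_bddBelow hd hB hreg_bdd hWp p)
        ⟨_, zero_elem_genSet zero_mem_Scal p⟩ (fun t ht => ?_)
      obtain ⟨w, hw, rfl⟩ := ht
      exact ⟨w, hw.1, rfl⟩
    · exact gen_le_sup hd hB hreg_bdd hWs zero_mem_Scal p
        (fun y => le_csSup hbAbove ⟨y, rfl⟩)
end
end

section
/- For every μ > H̄*, every p ∈ ℝ^d and every x ∈ ℝ^d: liminf_{|y|→∞} |y|^{-1} ( m_μ(y,x) − p·y ) ≥ 0 if and only if μ ≥ H̄₊(p). -/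
open MeasureTheory Filter Topology Bornology
open scoped RealInnerProductSpace NNReal

noncomputable section

section Helpers

variable {d : ℕ}


lemma inner_gradient (w : Ed d → ℝ) (x v : Ed d) :
    ⟪gradient w x, v⟫ = fderiv ℝ w x v := by
  simp [gradient, InnerProductSpace.toDual_symm_apply]

lemma hasDerivAt_line {w : Ed d → ℝ} {a v : Ed d} {t₀ : ℝ}
    (hx : DifferentiableAt ℝ w (a + t₀ • v)) :
    HasDerivAt (fun t : ℝ => w (a + t • v)) ⟪gradient w (a + t₀ • v), v⟫ t₀ := by
  have hc : HasDerivAt (fun t : ℝ => a + t • v) v t₀ := by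
    simpa using ((hasDerivAt_id t₀).smul_const v).const_add a
  have h2 := hx.hasFDerivAt.comp_hasDerivAt t₀ hc
  rw [inner_gradient]
  exact h2

lemma ae_comp_sub {P : Ed d → Prop} (h : ∀ᵐ y : Ed d ∂volume, P y) (c : Ed d) :
    ∀ᵐ z : Ed d ∂volume, P (c - z) :=
  (MeasureTheory.Measure.measurePreserving_sub_left (volume : Measure (Ed d)) c).quasiMeasurePreserving.ae h

lemma measurable_inner_gradient (w : Ed d → ℝ) (v : Ed d) :
    Measurable (fun y : Ed d => (⟪gradient w y, v⟫ : ℝ)) := by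
  have h1 : Measurable (fderiv ℝ w) := measurable_fderiv ℝ w
  have h2 : Measurable (fun y : Ed d => fderiv ℝ w y v) :=
    (ContinuousLinearMap.apply ℝ ℝ v).continuous.measurable.comp h1
  simpa only [inner_gradient] using h2

set_option maxHeartbeats 1000000 in
lemma incr_of_ae_inner_le {C : ℝ≥0} {w : Ed d → ℝ} (hw : LipschitzWith C w)
    (a v : Ed d) (σ δ : ℝ) (hδ : 0 < δ)
    (hae : ∀ᵐ z : Ed d ∂volume,
      (∃ t ∈ Set.Icc (0:ℝ) 1, dist z (a + t • v) ≤ δ) → ⟪gradient w z, v⟫ ≤ σ) :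
    w (a + v) - w a ≤ σ := by
  have hwc : Continuous w := hw.continuous
  have key : ∀ δ' : ℝ, 0 < δ' → δ' < δ → w (a + v) - w a ≤ σ + 2 * C * δ' := by
    intro δ' hδ'0 hδ'δ
    set ρ : ContDiffBump (0 : Ed d) := ⟨δ' / 2, δ', by linarith, by linarith⟩ with hρ
    set φ : Ed d → ℝ := ρ.normed volume with hφ
    have hφcont : Continuous φ := ρ.continuous_normed
    have hφnonneg : ∀ z, 0 ≤ φ z := fun z => ρ.nonneg_normed z
    have hφint : Integrable φ volume := ρ.integrable_normed
    have hφone : ∫ z, φ z = 1 := ρ.integral_normed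
    have hφsupp : ∀ z : Ed d, z ∉ Metric.ball (0 : Ed d) δ' → φ z = 0 := by
      intro z hz
      have h : z ∉ Function.support φ := by
        rw [hφ, ρ.support_normed_eq]; exact hz
      simpa [Function.mem_support, not_not] using h
    have hFint : ∀ t : ℝ, Integrable (fun z => φ z * w (a + t • v - z)) volume := by
      intro t
      apply Continuous.integrable_of_hasCompactSupport
      · exact hφcont.mul (hwc.comp (by continuity))
      · exact (ρ.hasCompactSupport_normed).mul_right
    have hg : ∀ t₀ : ℝ,
        Integrable (fun z => φ z * ⟪gradient w (a + t₀ • v - z), v⟫) volume ∧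
        HasDerivAt (fun t => ∫ z, φ z * w (a + t • v - z))
          (∫ z, φ z * ⟪gradient w (a + t₀ • v - z), v⟫) t₀ := by
      intro t₀
      refine hasDerivAt_integral_of_dominated_loc_of_lip
        (F := fun t z => φ z * w (a + t • v - z))
        (F' := fun z => φ z * ⟪gradient w (a + t₀ • v - z), v⟫)
        (bound := fun z => φ z * (C * ‖v‖)) (s := Set.univ) Filter.univ_mem ?_ (hFint t₀) ?_ ?_ ?_ ?_
      · exact Eventually.of_forall fun t =>
          (hφcont.mul (hwc.comp (by continuity))).aestronglyMeasurable
      · exact ((hφcont.measurable.mul ((measurable_inner_gradient w v).comp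
          (measurable_const.sub measurable_id)))).aestronglyMeasurable
      · refine Eventually.of_forall fun z => ?_
        have hK : LipschitzWith (Real.nnabs (φ z * (↑C * ‖v‖)))
            (fun t : ℝ => φ z * w (a + t • v - z)) := by
          refine LipschitzWith.of_dist_le_mul fun s t => ?_
          have h1 : dist (a + s • v - z) (a + t • v - z) = dist s t * ‖v‖ := by
            rw [dist_eq_norm]
            have e : a + s • v - z - (a + t • v - z) = (s - t) • v := by
              rw [sub_smul]; abel
            rw [e, norm_smul, Real.dist_eq, Real.norm_eq_abs]
          have h2 : dist (w (a + s • v - z)) (w (a + t • v - z)) ≤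
              C * (dist s t * ‖v‖) := h1 ▸ hw.dist_le_mul _ _
          have h3 : dist (φ z * w (a + s • v - z)) (φ z * w (a + t • v - z)) =
              φ z * dist (w (a + s • v - z)) (w (a + t • v - z)) := by
            rw [Real.dist_eq, Real.dist_eq, ← mul_sub, abs_mul, abs_of_nonneg (hφnonneg z)]
          rw [h3]
          have h4 : (↑(Real.nnabs (φ z * (C * ‖v‖))) : ℝ) = φ z * (C * ‖v‖) := by
            rw [Real.coe_nnabs, abs_of_nonneg (mul_nonneg (hφnonneg z) (by positivity))]
          rw [h4]
          calc φ z * dist (w (a + s • v - z)) (w (a + t • v - z))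
              ≤ φ z * (C * (dist s t * ‖v‖)) :=
                mul_le_mul_of_nonneg_left h2 (hφnonneg z)
            _ = φ z * (C * ‖v‖) * dist s t := by ring
        exact hK.lipschitzOnWith
      · exact hφint.mul_const _
      · have hrad := hw.ae_differentiableAt (μ := (volume : Measure (Ed d)))
        filter_upwards [ae_comp_sub hrad (a + t₀ • v)] with z hz
        have e1 : ∀ t : ℝ, a - z + t • v = a + t • v - z := fun t =>
          sub_add_eq_add_sub a z (t • v)
        have hz' : DifferentiableAt ℝ w (a - z + t₀ • v) := by rw [e1]; exact hz
        have h1 := hasDerivAt_line (w := w) (a := a - z) (v := v) (t₀ := t₀) hz'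
        simp only [e1] at h1
        exact h1.const_mul (φ z)
    set g : ℝ → ℝ := fun t => ∫ z, φ z * w (a + t • v - z) with hgdef
    set D : ℝ → ℝ := fun t => ∫ z, φ z * ⟪gradient w (a + t • v - z), v⟫ with hDdef
    have hDle : ∀ t ∈ Set.Icc (0:ℝ) 1, D t ≤ σ := by
      intro t ht
      have hb : ∀ᵐ z : Ed d ∂volume,
          φ z * ⟪gradient w (a + t • v - z), v⟫ ≤ φ z * σ := by
        filter_upwards [ae_comp_sub hae (a + t • v)] with z hz
        by_cases hzb : z ∈ Metric.ball (0 : Ed d) δ'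
        · refine mul_le_mul_of_nonneg_left ?_ (hφnonneg z)
          refine hz ⟨t, ht, ?_⟩
          rw [dist_eq_norm]
          have e : a + t • v - z - (a + t • v) = -z := by abel
          rw [e, norm_neg]
          have hzb' : ‖z‖ < δ' := by
            have := Metric.mem_ball.mp hzb
            rwa [dist_zero_right] at this
          linarith
        · rw [hφsupp z hzb]; simp
      calc D t ≤ ∫ z, φ z * σ := integral_mono_ae ((hg t).1) (hφint.mul_const σ) hb
        _ = (∫ z, φ z) * σ := by rw [integral_mul_const]
        _ = σ := by rw [hφone, one_mul]
    have hgd : ∀ t : ℝ, HasDerivAt g (D t) t := fun t => (hg t).2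
    have hmono : g 1 - g 0 ≤ σ := by
      have hdiff : ∀ t : ℝ, HasDerivAt (fun s => σ * s - g s) (σ - D t) t := by
        intro t
        simpa using ((hasDerivAt_id' t).const_mul σ).fun_sub (hgd t)
      have hmOn : MonotoneOn (fun s => σ * s - g s) (Set.Icc (0:ℝ) 1) := by
        refine monotoneOn_of_deriv_nonneg (convex_Icc 0 1) ?_ ?_ ?_
        · exact (Differentiable.continuous fun t => (hdiff t).differentiableAt).continuousOn
        · exact (fun t _ => ((hdiff t).differentiableAt).differentiableWithinAt)
        · intro t ht
          rw [interior_Icc] at ht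
          rw [(hdiff t).deriv]
          have := hDle t ⟨le_of_lt ht.1, le_of_lt ht.2⟩
          linarith
      have h01 := hmOn (Set.mem_Icc.mpr ⟨le_refl 0, zero_le_one⟩)
        (Set.mem_Icc.mpr ⟨zero_le_one, le_refl 1⟩) zero_le_one
      simp only [mul_zero, mul_one] at h01
      linarith
    have hend : ∀ t : ℝ, |g t - w (a + t • v)| ≤ C * δ' := by
      intro t
      set b := a + t • v with hb
      have hconst : Integrable (fun z => φ z * w b) volume := hφint.mul_const _
      have hsub : g t - w b = ∫ z, (φ z * w (b - z) - φ z * w b) := by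
        rw [integral_sub (hFint t) hconst, integral_mul_const, hφone, one_mul]
      rw [hsub]
      have hbound : ∀ᵐ z : Ed d ∂volume,
          ‖φ z * w (b - z) - φ z * w b‖ ≤ φ z * (C * δ') := by
        refine Eventually.of_forall fun z => ?_
        by_cases hzb : z ∈ Metric.ball (0 : Ed d) δ'
        · have hzb' : ‖z‖ ≤ δ' := by
            have := Metric.mem_ball.mp hzb
            rw [dist_zero_right] at this; linarith
          have h1 : |w (b - z) - w b| ≤ C * ‖z‖ := by
            have := hw.dist_le_mul (b - z) b
            rw [Real.dist_eq, dist_eq_norm] at this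
            simpa using this
          rw [Real.norm_eq_abs, ← mul_sub, abs_mul, abs_of_nonneg (hφnonneg z)]
          calc φ z * |w (b - z) - w b| ≤ φ z * (C * ‖z‖) :=
                mul_le_mul_of_nonneg_left h1 (hφnonneg z)
            _ ≤ φ z * (C * δ') := by
                refine mul_le_mul_of_nonneg_left ?_ (hφnonneg z)
                exact mul_le_mul_of_nonneg_left hzb' C.coe_nonneg
        · rw [hφsupp z hzb]; simp [mul_nonneg C.coe_nonneg (le_of_lt hδ'0)]
      have := norm_integral_le_of_norm_le (hφint.mul_const (C * δ')) hbound
      rw [Real.norm_eq_abs] at this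
      calc |∫ z, (φ z * w (b - z) - φ z * w b)| ≤ ∫ z, φ z * (C * δ') := this
        _ = (∫ z, φ z) * (C * δ') := by rw [integral_mul_const]
        _ = C * δ' := by rw [hφone, one_mul]
    have h0 : |g 0 - w a| ≤ C * δ' := by
      have := hend 0
      simpa using this
    have h1 : |g 1 - w (a + v)| ≤ C * δ' := by
      have := hend 1
      simpa using this
    have h0' := abs_le.mp h0
    have h1' := abs_le.mp h1
    have hC := C.coe_nonneg
    linarith [hmono, h0'.1, h0'.2, h1'.1, h1'.2]
  by_contra hcon
  push_neg at hcon
  set ε := w (a + v) - w a - σ with hε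
  have hε0 : 0 < ε := by linarith
  have hC := C.coe_nonneg
  set δ' := min (δ / 2) (ε / (2 * C + 1)) with hδ'
  have hδ'0 : 0 < δ' := lt_min (by linarith) (by positivity)
  have hδ'δ : δ' < δ := lt_of_le_of_lt (min_le_left _ _) (by linarith)
  have hkey := key δ' hδ'0 hδ'δ
  have h2 : 2 * C * δ' ≤ 2 * C * (ε / (2 * C + 1)) :=
    mul_le_mul_of_nonneg_left (min_le_right _ _) (by positivity)
  have h3 : 2 * (C:ℝ) * (ε / (2 * C + 1)) < ε := by
    rw [mul_div_assoc', div_lt_iff₀ (by positivity)]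
    nlinarith
  linarith


lemma aeNeBot : (ae (volume : Measure (Ed d))).NeBot := by
  refine ae_neBot.2 ?_
  intro h
  have h2 := Metric.measure_ball_pos (volume : Measure (Ed d)) (0 : Ed d) one_pos
  rw [h] at h2
  simp at h2

lemma ae_lt_of_essSup_lt' {f : Ed d → ℝ} {c : ℝ} (hbdd : ∃ M, ∀ y, f y ≤ M)
    (h : essSup f volume < c) : ∀ᵐ y : Ed d ∂volume, f y < c := by
  obtain ⟨M, hM⟩ := hbdd
  exact Filter.eventually_lt_of_limsup_lt h (Filter.isBoundedUnder_of ⟨M, hM⟩)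

lemma essSup_le_of_ae_le' {f : Ed d → ℝ} {c : ℝ} (hlow : ∃ m, ∀ y, m ≤ f y)
    (h : ∀ᵐ y : Ed d ∂volume, f y ≤ c) : essSup f volume ≤ c := by
  obtain ⟨m, hm⟩ := hlow
  haveI := aeNeBot (d := d)
  exact Filter.limsup_le_of_le
    (Filter.isCoboundedUnder_le_of_le (ae volume) (x := m) hm) h

lemma le_essSup_of_ae_le {f : Ed d → ℝ} {c : ℝ} (hbdd : ∃ M, ∀ y, f y ≤ M)
    (h : ∀ᵐ y : Ed d ∂volume, c ≤ f y) : c ≤ essSup f volume := by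
  obtain ⟨M, hM⟩ := hbdd
  haveI := aeNeBot (d := d)
  exact Filter.le_limsup_of_frequently_le h.frequently (Filter.isBoundedUnder_of ⟨M, hM⟩)

lemma mem_of_isClosed_midpoint {T : Set ℝ} (hT : IsClosed T)
    (hmid : ∀ a ∈ T, ∀ b ∈ T, (a + b) / 2 ∈ T)
    (h0 : (0:ℝ) ∈ T) (h1 : (1:ℝ) ∈ T) {t : ℝ} (ht : t ∈ Set.Icc (0:ℝ) 1) : t ∈ T := by
  set F : ℕ → ℝ × ℝ := fun n => Nat.rec ((0:ℝ), (1:ℝ))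
    (fun _ p => if t ≤ (p.1 + p.2) / 2 then (p.1, (p.1 + p.2) / 2)
      else ((p.1 + p.2) / 2, p.2)) n with hF
  have hFs : ∀ n, F (n+1) = if t ≤ ((F n).1 + (F n).2) / 2 then ((F n).1, ((F n).1 + (F n).2)/2)
      else (((F n).1 + (F n).2)/2, (F n).2) := fun n => rfl
  have hinv : ∀ n, (F n).1 ∈ T ∧ (F n).2 ∈ T ∧ (F n).1 ≤ t ∧ t ≤ (F n).2 ∧
      (F n).2 - (F n).1 = (1/2)^n := by
    intro n
    induction n with
    | zero => exact ⟨h0, h1, ht.1, ht.2, by rw [hF]; norm_num⟩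
    | succ n ih =>
      obtain ⟨ha, hb, hat, htb, hlen⟩ := ih
      rw [hFs n]
      by_cases hc : t ≤ ((F n).1 + (F n).2) / 2
      · rw [if_pos hc]
        refine ⟨ha, hmid _ ha _ hb, hat, hc, ?_⟩
        simp only [pow_succ]
        linarith
      · rw [if_neg hc]
        refine ⟨hmid _ ha _ hb, hb, (not_le.mp hc).le, htb, ?_⟩
        simp only [pow_succ]
        linarith
  have htend : Tendsto (fun n => (F n).1) atTop (nhds t) := by
    have hpow : Tendsto (fun n : ℕ => ((1:ℝ)/2)^n) atTop (nhds 0) := by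
      apply tendsto_pow_atTop_nhds_zero_of_lt_one <;> norm_num
    have hlow : Tendsto (fun n : ℕ => t - ((1:ℝ)/2)^n) atTop (nhds t) := by
      simpa using tendsto_const_nhds.sub hpow
    refine tendsto_of_tendsto_of_tendsto_of_le_of_le hlow tendsto_const_nhds ?_ ?_
    · intro n
      obtain ⟨_, _, hat, htb, hlen⟩ := hinv n
      linarith
    · intro n; exact (hinv n).2.2.1
  exact hT.mem_of_tendsto htend (Eventually.of_forall fun n => (hinv n).1)

lemma convex_of_midpoint {K : Set (Ed d)} (hK : IsClosed K)
    (hmid : ∀ p ∈ K, ∀ q ∈ K, (1/2 : ℝ) • (p + q) ∈ K) : Convex ℝ K := by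
  intro x hx y hy a b ha hb hab
  set T : Set ℝ := {t : ℝ | x + t • (y - x) ∈ K} with hT
  have hTc : IsClosed T := hK.preimage (by continuity)
  have h0 : (0:ℝ) ∈ T := by
    simp only [hT, Set.mem_setOf_eq, zero_smul, add_zero]
    exact hx
  have h1 : (1:ℝ) ∈ T := by
    simp only [hT, Set.mem_setOf_eq, one_smul]
    have : x + (y - x) = y := by abel
    rw [this]; exact hy
  have hTm : ∀ s ∈ T, ∀ u ∈ T, (s+u)/2 ∈ T := by
    intro s hs u hu
    have h := hmid _ hs _ hu
    have e : (1/2 : ℝ) • ((x + s • (y - x)) + (x + u • (y - x)))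
        = x + ((s+u)/2) • (y - x) := by module
    rw [e] at h
    exact h
  have hb' : b ∈ Set.Icc (0:ℝ) 1 := ⟨hb, by linarith⟩
  have hmem := mem_of_isClosed_midpoint hTc hTm h0 h1 hb'
  have ha' : a = 1 - b := by linarith
  have e : a • x + b • y = x + b • (y - x) := by rw [ha']; module
  rw [e]
  exact hmem


lemma inner_gradient' (w : Ed d → ℝ) (x v : Ed d) :
    ⟪gradient w x, v⟫ = fderiv ℝ w x v := by
  simp [gradient, InnerProductSpace.toDual_symm_apply]

lemma lipschitz_inner_const (p : Ed d) : LipschitzWith ‖p‖₊ (fun y : Ed d => ⟪p, y⟫) := by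
  refine LipschitzWith.of_dist_le_mul fun y y' => ?_
  rw [Real.dist_eq, ← inner_sub_right, dist_eq_norm]
  calc |⟪p, y - y'⟫| ≤ ‖p‖ * ‖y - y'‖ := abs_real_inner_le_norm p (y - y')
    _ = ↑‖p‖₊ * ‖y - y'‖ := by rw [coe_nnnorm]

lemma hasFDerivAt_inner_const (p : Ed d) (z : Ed d) :
    HasFDerivAt (fun y : Ed d => ⟪p, y⟫) (innerSL ℝ p) z := by
  have h := (innerSL ℝ p).hasFDerivAt (x := z)
  have e : (fun y : Ed d => ⟪p, y⟫) = ⇑(innerSL ℝ p) := by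
    funext y; simp
  rw [e]
  exact h

lemma toDual_symm_innerSL (p : Ed d) :
    (InnerProductSpace.toDual ℝ (Ed d)).symm (innerSL ℝ p) = p := by
  have e : innerSL ℝ p = InnerProductSpace.toDual ℝ (Ed d) p := by
    ext y; simp [InnerProductSpace.toDual_apply_apply]
  rw [e, LinearIsometryEquiv.symm_apply_apply]

lemma gradient_const_inner_add {w : Ed d → ℝ} {z : Ed d}
    (hw : DifferentiableAt ℝ w z) (p : Ed d) :
    gradient (fun y => ⟪p, y⟫ + w y) z = p + gradient w z := by
  have hi : DifferentiableAt ℝ (fun y : Ed d => ⟪p, y⟫) z :=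
    (hasFDerivAt_inner_const p z).differentiableAt
  rw [gradient, gradient, fderiv_fun_add hi hw, (hasFDerivAt_inner_const p z).fderiv, map_add,
    toDual_symm_innerSL]

lemma gradient_sub_const_inner {m : Ed d → ℝ} {z : Ed d}
    (hm : DifferentiableAt ℝ m z) (p : Ed d) :
    gradient (fun y => m y - ⟪p, y⟫) z = gradient m z - p := by
  have hi : DifferentiableAt ℝ (fun y : Ed d => ⟪p, y⟫) z :=
    (hasFDerivAt_inner_const p z).differentiableAt
  rw [gradient, gradient, fderiv_fun_sub hm hi, (hasFDerivAt_inner_const p z).fderiv, map_sub,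
    toDual_symm_innerSL]

lemma gradient_half_add {w₁ w₂ : Ed d → ℝ} {z : Ed d}
    (h1 : DifferentiableAt ℝ w₁ z) (h2 : DifferentiableAt ℝ w₂ z) :
    gradient (fun y => (w₁ y + w₂ y) / 2) z
      = (1/2 : ℝ) • (gradient w₁ z + gradient w₂ z) := by
  have e : (fun y => (w₁ y + w₂ y) / 2) = fun y => (2⁻¹ : ℝ) * (w₁ y + w₂ y) := by
    funext y; ring
  rw [e, gradient, fderiv_const_mul (h1.fun_add h2) (2⁻¹ : ℝ), fderiv_fun_add h1 h2, _root_.map_smul, map_add]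
  rw [gradient, gradient]
  norm_num

lemma lipschitzWith_half_add {K₁ K₂ : ℝ≥0} {w₁ w₂ : Ed d → ℝ}
    (h1 : LipschitzWith K₁ w₁) (h2 : LipschitzWith K₂ w₂) :
    LipschitzWith (K₁ + K₂) (fun y => (w₁ y + w₂ y) / 2) := by
  refine LipschitzWith.of_dist_le_mul fun y y' => ?_
  have hd1 := h1.dist_le_mul y y'
  have hd2 := h2.dist_le_mul y y'
  rw [Real.dist_eq] at hd1 hd2 ⊢
  push_cast
  have e2 : (w₁ y + w₂ y) / 2 - (w₁ y' + w₂ y') / 2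
      = ((w₁ y - w₁ y') + (w₂ y - w₂ y')) / 2 := by ring
  rw [e2, abs_div, abs_two]
  have habs := abs_add_le (w₁ y - w₁ y') (w₂ y - w₂ y')
  have hnn : (0:ℝ) ≤ (↑K₁ + ↑K₂) * dist y y' :=
    mul_nonneg (add_nonneg K₁.coe_nonneg K₂.coe_nonneg) dist_nonneg
  linarith

lemma norm_gradient_le' {C : ℝ≥0} {w : Ed d → ℝ} (hw : LipschitzWith C w) (x : Ed d) :
    ‖gradient w x‖ ≤ C := by
  rw [gradient, LinearIsometryEquiv.norm_map]
  by_cases h : DifferentiableAt ℝ w x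
  · exact norm_fderiv_le_of_lipschitz ℝ hw
  · simp [fderiv_zero_of_not_differentiableAt h]

lemma adm_increment {H : Ed d → Ed d → ℝ} {μ L : ℝ}
    (hL : ∀ q z : Ed d, H q z ≤ μ → ‖q‖ ≤ L)
    {w : Ed d → ℝ} (hw : w ∈ LipFuns d)
    (hae : ∀ᵐ z ∂volume, H (gradient w z) z ≤ μ)
    (y₁ y₂ : Ed d) : w y₁ - w y₂ ≤ L * ‖y₁ - y₂‖ := by
  obtain ⟨C, hC⟩ := hw
  have h := incr_of_ae_inner_le hC y₂ (y₁ - y₂) (L * ‖y₁ - y₂‖) 1 one_pos ?_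
  · have e : y₂ + (y₁ - y₂) = y₁ := by abel
    rw [e] at h
    exact h
  · filter_upwards [hae] with z hz _
    calc ⟪gradient w z, y₁ - y₂⟫ ≤ ‖gradient w z‖ * ‖y₁ - y₂‖ := real_inner_le_norm _ _
      _ ≤ L * ‖y₁ - y₂‖ := mul_le_mul_of_nonneg_right (hL _ _ hz) (norm_nonneg _)

end Helpers

set_option maxHeartbeats 2000000 in
/-- characterization of H̄₊ via the sublinearity of m_μ(·,x) − p·(·). -/
theorem statement_8
    (d : ℕ) (hd : 0 < d)
    (H : Ed d → Ed d → ℝ)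
    (hHcont : Continuous fun q : Ed d × Ed d => H q.1 q.2)
    (hreg_bdd : ∀ R : ℝ, 0 < R → ∃ M : ℝ, ∀ p y : Ed d, ‖p‖ ≤ R → |H p y| ≤ M)
    (hreg_uc : ∀ R : ℝ, 0 < R → ∀ ε : ℝ, 0 < ε → ∃ δ : ℝ, 0 < δ ∧ ∀ p p' y y' : Ed d,
      ‖p‖ ≤ R → ‖p'‖ ≤ R → ‖p - p'‖ < δ → ‖y - y'‖ < δ → |H p y - H p' y'| < ε)
    (hcoer : ∀ M : ℝ, ∃ R : ℝ, ∀ p y : Ed d, R ≤ ‖p‖ → M ≤ H p y)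
    (hqc : ∀ p q y : Ed d, H ((1/2 : ℝ) • (p + q)) y ≤ max (H p y) (H q y))
    (Λ : ℝ → ℝ → ℝ)
    (hΛcont : Continuous fun m : ℝ × ℝ => Λ m.1 m.2)
    (hΛmono : ∀ a b a' b' : ℝ, a ≤ a' → b ≤ b' → Λ a b ≤ Λ a' b')
    (hΛstrict : ∀ a b : ℝ, a ≠ b → Λ a b < max a b)
    (hsqc : ∀ p q y : Ed d, H ((1/2 : ℝ) • (p + q)) y ≤ Λ (H p y) (H q y))
    :
    ∀ μ : ℝ, Hstar d H < μ → ∀ p x : Ed d,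
      ((∀ ε : ℝ, 0 < ε → ∃ R : ℝ, ∀ y : Ed d, R ≤ ‖y‖ →
          -ε ≤ (mMu d H μ y x - ⟪p, y⟫) / ‖y‖) ↔ HbarPlus d H p ≤ μ) := by
  intro μ hμ p x
  -- global lower bound m₀ for H
  obtain ⟨R₀, hR₀⟩ := hcoer 0
  obtain ⟨M₀, hM₀⟩ := hreg_bdd (max R₀ 1) (lt_of_lt_of_le one_pos (le_max_right _ _))
  set m₀ : ℝ := min 0 (-M₀) with hm₀def
  have hm₀ : ∀ q z : Ed d, m₀ ≤ H q z := by
    intro q z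
    by_cases h : ‖q‖ ≤ max R₀ 1
    · have h1 := abs_le.mp (hM₀ q z h)
      exact le_trans (min_le_right _ _) (by linarith [h1.1])
    · exact le_trans (min_le_left _ _)
        (hR₀ q z (le_trans (le_max_left _ _) (not_le.mp h).le))
  -- coercive bound at level μ+1
  obtain ⟨Rc, hRc⟩ := hcoer (μ + 1)
  set L : ℝ := max Rc 0 with hLdef
  have hL0 : (0:ℝ) ≤ L := le_max_right _ _
  have hL : ∀ q z : Ed d, H q z ≤ μ → ‖q‖ ≤ L := by
    intro q z hq
    by_contra hb
    push_neg at hb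
    have := hRc q z (le_trans (le_max_left _ _) hb.le)
    linarith
  -- uniform upper bounds for Lipschitz perturbations
  have hub : ∀ (p' : Ed d) (C : ℝ≥0) (w : Ed d → ℝ), LipschitzWith C w →
      ∃ M, ∀ y, H (p' + gradient w y) y ≤ M := by
    intro p' C w hw
    obtain ⟨M, hM⟩ := hreg_bdd (‖p'‖ + C + 1) (by positivity)
    refine ⟨M, fun y => le_trans (le_abs_self _) (hM _ _ ?_)⟩
    have h1 := norm_gradient_le' hw y
    calc ‖p' + gradient w y‖ ≤ ‖p'‖ + ‖gradient w y‖ := norm_add_le _ _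
      _ ≤ ‖p'‖ + ↑C + 1 := by linarith
  -- the zero function
  have h0lip : (0 : Ed d → ℝ) ∈ LipFuns d := ⟨0, by
    intro y y'
    simp⟩
  -- strict subsolution u from Hstar < μ
  have hSstar_ne : {t | ∃ w ∈ LipFuns d,
      t = essSup (fun y => H (gradient w y) y) volume}.Nonempty :=
    ⟨_, ⟨(0 : Ed d → ℝ), h0lip, rfl⟩⟩
  obtain ⟨t₀, ht₀S, ht₀μ⟩ := exists_lt_of_csInf_lt hSstar_ne hμ
  obtain ⟨u, huLip, ht₀⟩ := ht₀S
  obtain ⟨Cu, hCu⟩ := huLip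
  set μ₀ : ℝ := (t₀ + μ)/2 with hμ₀def
  have hμ₀lt : μ₀ < μ := by rw [hμ₀def]; linarith
  have ht₀μ₀ : t₀ < μ₀ := by rw [hμ₀def]; linarith
  have hu_ae : ∀ᵐ z ∂volume, H (gradient u z) z ≤ μ₀ := by
    have hub' : ∃ M, ∀ y, H (gradient u y) y ≤ M := by
      obtain ⟨M, hM⟩ := hub 0 Cu u hCu
      exact ⟨M, fun y => by simpa using hM y⟩
    have := ae_lt_of_essSup_lt' hub' (by rw [← ht₀]; exact ht₀μ₀)
    exact this.mono fun z hz => hz.le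
  have hu_aeμ : ∀ᵐ z ∂volume, H (gradient u z) z ≤ μ :=
    hu_ae.mono fun z hz => le_trans hz hμ₀lt.le
  -- the admissible class and basic properties of mMu
  set Aset : Ed d → Set ℝ := fun y => {t | ∃ w ∈ LipFuns d,
    (∀ᵐ z ∂volume, H (gradient w z) z ≤ μ) ∧ t = w y - w x} with hAsetdef
  have hA_ne : ∀ y, (Aset y).Nonempty :=
    fun y => ⟨u y - u x, u, ⟨Cu, hCu⟩, hu_aeμ, rfl⟩
  have hA_bdd : ∀ y, BddAbove (Aset y) := by
    intro y
    refine ⟨L * ‖y - x‖, ?_⟩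
    rintro t ⟨w', hw', hae', rfl⟩
    exact adm_increment hL hw' hae' y x
  have hmMu_eq : ∀ y, mMu d H μ y x = sSup (Aset y) := fun y => rfl
  constructor
  · -- (⇒)
    intro hliminf
    set m : Ed d → ℝ := fun y => mMu d H μ y x with hmdef
    have hub_m : ∀ y y', m y ≤ m y' + L * ‖y - y'‖ := by
      intro y y'
      have h1 : sSup (Aset y) ≤ m y' + L * ‖y - y'‖ := by
        refine csSup_le (hA_ne y) ?_
        rintro t ⟨w', hw', hae', rfl⟩
        have h2 : w' y - w' y' ≤ L * ‖y - y'‖ := adm_increment hL hw' hae' y y'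
        have h3 : w' y' - w' x ≤ sSup (Aset y') := le_csSup (hA_bdd y') ⟨w', hw', hae', rfl⟩
        have h4 : m y' = sSup (Aset y') := hmMu_eq y'
        rw [h4]
        linarith
      have h5 : m y = sSup (Aset y) := hmMu_eq y
      rw [h5]
      exact h1
    have hmLip : LipschitzWith (Real.toNNReal L) m := by
      refine LipschitzWith.of_dist_le_mul fun y y' => ?_
      rw [Real.dist_eq, Real.coe_toNNReal L hL0, dist_eq_norm]
      refine abs_sub_le_iff.mpr ⟨?_, ?_⟩
      · have := hub_m y y'
        linarith
      · have := hub_m y' y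
        rw [norm_sub_rev] at this
        linarith
    -- pointwise subsolution property at differentiability points
    have hsub : ∀ z₀ : Ed d, DifferentiableAt ℝ m z₀ → H (gradient m z₀) z₀ ≤ μ := by
      intro z₀ hdiff
      by_contra hq
      push_neg at hq
      set q₀ : Ed d := gradient m z₀ with hq₀def
      set K : Set (Ed d) := {q | H q z₀ ≤ μ} with hKdef
      have hKcl : IsClosed K :=
        isClosed_le (hHcont.comp (continuous_id.prodMk continuous_const)) continuous_const
      have hKcv : Convex ℝ K := convex_of_midpoint hKcl
        (fun q1 h1 q2 h2 => le_trans (hqc q1 q2 z₀) (max_le h1 h2))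
      have hq₀K : q₀ ∉ K := by
        intro hmem
        exact absurd hmem (not_le.mpr hq)
      obtain ⟨f, ustar, hfK, hfq⟩ := geometric_hahn_banach_closed_point hKcv hKcl hq₀K
      -- a quantitative separation at slightly higher level
      have hdelta : ∃ δ : ℝ, 0 < δ ∧ ∀ q : Ed d, H q z₀ ≤ μ + δ → f q < ustar := by
        by_contra hcon
        push_neg at hcon
        obtain ⟨Rb, hRb⟩ := hcoer (μ + 2)
        have hQ : ∀ n : ℕ, ∃ q : Ed d, H q z₀ ≤ μ + 1/((n:ℝ)+1) ∧ ustar ≤ f q := by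
          intro n
          obtain ⟨q, h1, h2⟩ := hcon (1/((n:ℝ)+1)) (by positivity)
          exact ⟨q, h1, h2⟩
        choose Q hQ1 hQ2 using hQ
        have hQbdd : ∀ n, Q n ∈ Metric.closedBall (0 : Ed d) (max Rb 0) := by
          intro n
          rw [Metric.mem_closedBall, dist_zero_right]
          by_contra hb
          push_neg at hb
          have h1 := hRb (Q n) z₀ (le_trans (le_max_left _ _) hb.le)
          have h2 : 1/((n:ℝ)+1) ≤ 1 := by
            rw [div_le_one (by positivity)]
            have : (0:ℝ) ≤ (n:ℝ) := Nat.cast_nonneg n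
            linarith
          linarith [hQ1 n]
        obtain ⟨qlim, _, φ, hφ, hφt⟩ :=
          tendsto_subseq_of_bounded Metric.isBounded_closedBall hQbdd
        have hfc : Tendsto (fun n => f (Q (φ n))) atTop (nhds (f qlim)) :=
          (f.continuous.tendsto qlim).comp hφt
        have hHt : Tendsto (fun n => H (Q (φ n)) z₀) atTop (nhds (H qlim z₀)) :=
          ((hHcont.comp (continuous_id.prodMk continuous_const)).tendsto qlim).comp hφt
        have hlim2 : Tendsto (fun n => μ + 1/((φ n : ℝ)+1)) atTop (nhds μ) := by
          have h1 : Tendsto (fun n : ℕ => 1/((n:ℝ)+1)) atTop (nhds 0) :=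
            tendsto_one_div_add_atTop_nhds_zero_nat
          have h2 := h1.comp hφ.tendsto_atTop
          have := tendsto_const_nhds (x := μ) (f := atTop (α := ℕ)) |>.add h2
          simpa using this
        have hqlimK : qlim ∈ K := by
          have := le_of_tendsto_of_tendsto' hHt hlim2 (fun n => hQ1 (φ n))
          simpa [hKdef] using this
        have hlt := hfK qlim hqlimK
        have hge : ustar ≤ f qlim :=
          ge_of_tendsto hfc (Eventually.of_forall fun n => hQ2 (φ n))
        linarith
      obtain ⟨δ, hδ0, hδ⟩ := hdelta
      obtain ⟨δ₂, hδ₂0, hUC⟩ := hreg_uc (max Rc 1) (lt_of_lt_of_le one_pos (le_max_right _ _)) δ hδ0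
      set e : Ed d := (InnerProductSpace.toDual ℝ (Ed d)).symm f with hedef
      have hfe : ∀ q : Ed d, ⟪e, q⟫ = f q := fun q => InnerProductSpace.toDual_symm_apply
      set t₁ : ℝ := δ₂ / (2 * (‖e‖ + 1)) with ht₁def
      have ht₁0 : 0 < t₁ := by positivity
      have hslope : ∀ t : ℝ, 0 < t → t < t₁ → m (z₀ + t • e) - m z₀ ≤ t * ustar := by
        intro t ht0 htt₁
        have hincr : ∀ w' : Ed d → ℝ, w' ∈ LipFuns d →
            (∀ᵐ z ∂volume, H (gradient w' z) z ≤ μ) →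
            w' (z₀ + t • e) - w' z₀ ≤ t * ustar := by
          intro w' hw' hae'
          obtain ⟨C', hC'⟩ := hw'
          refine incr_of_ae_inner_le hC' z₀ (t • e) (t * ustar) (δ₂/2) (by linarith) ?_
          filter_upwards [hae'] with z hz hreg
          obtain ⟨sc, hsc, hdist⟩ := hreg
          have hdz : ‖z - z₀‖ < δ₂ := by
            have h1 := dist_triangle z (z₀ + sc • t • e) z₀
            have h2 : dist (z₀ + sc • t • e) z₀ = ‖sc • t • e‖ := by
              rw [dist_eq_norm]
              congr 1
              abel
            have h3 : ‖sc • t • e‖ = sc * (t * ‖e‖) := by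
              rw [norm_smul, norm_smul, Real.norm_eq_abs, Real.norm_eq_abs,
                abs_of_nonneg hsc.1, abs_of_nonneg ht0.le]
            have h4 : sc * (t * ‖e‖) ≤ t * ‖e‖ := by
              nlinarith [hsc.2, ht0.le, norm_nonneg e, hsc.1, mul_nonneg ht0.le (norm_nonneg e)]
            have h5 : t * ‖e‖ < δ₂ / 2 := by
              have he1 : t * ‖e‖ ≤ t * (‖e‖ + 1) := by nlinarith [ht0.le]
              have he2 : t * (‖e‖ + 1) < t₁ * (‖e‖ + 1) :=
                mul_lt_mul_of_pos_right htt₁ (by positivity)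
              have he3 : t₁ * (‖e‖ + 1) = δ₂ / 2 := by
                rw [ht₁def]
                field_simp
              linarith
            rw [dist_eq_norm] at h1
            rw [h2, h3] at h1
            linarith
          have hnq : ‖gradient w' z‖ ≤ max Rc 1 := le_trans (hL _ _ hz)
            (max_le_max (le_refl Rc) zero_le_one)
          have huc := hUC (gradient w' z) (gradient w' z) z z₀ hnq hnq
            (by simpa using hδ₂0) hdz
          have hHz₀ : H (gradient w' z) z₀ ≤ μ + δ := by
            have := abs_lt.mp huc
            linarith
          have hflt := hδ _ hHz₀
          rw [real_inner_smul_right]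
          have he : ⟪gradient w' z, e⟫ = f (gradient w' z) := by
            rw [real_inner_comm]
            exact hfe _
          rw [he]
          exact mul_le_mul_of_nonneg_left hflt.le ht0.le
        have h1 : sSup (Aset (z₀ + t • e)) ≤ t * ustar + m z₀ := by
          refine csSup_le (hA_ne _) ?_
          rintro tt ⟨w', hw', hae', rfl⟩
          have h2 := hincr w' hw' hae'
          have h3 : w' z₀ - w' x ≤ sSup (Aset z₀) := le_csSup (hA_bdd z₀) ⟨w', hw', hae', rfl⟩
          have h4 : m z₀ = sSup (Aset z₀) := hmMu_eq z₀
          rw [h4]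
          linarith
        have h5 : m (z₀ + t • e) = sSup (Aset (z₀ + t • e)) := hmMu_eq _
        rw [h5]
        linarith
      have hline : HasDerivAt (fun t : ℝ => m (z₀ + t • e)) ⟪q₀, e⟫ 0 := by
        have h := hasDerivAt_line (w := m) (a := z₀) (v := e) (t₀ := 0)
          (by rw [zero_smul, add_zero]; exact hdiff)
        simpa only [zero_smul, add_zero] using h
      have hslope_lim : ⟪q₀, e⟫ ≤ ustar := by
        have h1 := hasDerivAt_iff_tendsto_slope.mp hline
        have h2 : Tendsto (slope (fun t : ℝ => m (z₀ + t • e)) 0)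
            (nhdsWithin 0 (Set.Ioi (0:ℝ))) (nhds ⟪q₀, e⟫) :=
          h1.mono_left (nhdsWithin_mono 0 (fun t ht => ne_of_gt ht))
        refine le_of_tendsto h2 ?_
        filter_upwards [Ioo_mem_nhdsGT ht₁0] with t ht
        have hs1 := hslope t ht.1 ht.2
        rw [slope_def_field]
        simp only [zero_smul, add_zero, sub_zero]
        rw [div_le_iff₀ ht.1]
        nlinarith [hs1]
      have hcontra : f q₀ ≤ ustar := by
        rw [← hfe q₀, real_inner_comm]
        exact hslope_lim
      linarith
    have hm_ae : ∀ᵐ z ∂volume, H (gradient m z) z ≤ μ := by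
      filter_upwards [hmLip.ae_differentiableAt (μ := (volume : Measure (Ed d)))] with z hz
      exact hsub z hz
    set wstar : Ed d → ℝ := fun y => m y - ⟪p, y⟫ with hwstardef
    have hwstarLip : LipschitzWith (Real.toNNReal L + ‖p‖₊) wstar :=
      hmLip.sub (lipschitz_inner_const p)
    have hwstarSL : wstar ∈ SLplus d := ⟨⟨_, hwstarLip⟩, hliminf⟩
    have hwstar_ae : ∀ᵐ y ∂volume, H (p + gradient wstar y) y ≤ μ := by
      filter_upwards [hm_ae, hmLip.ae_differentiableAt (μ := (volume : Measure (Ed d)))] with y h1 h2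
      have e1 : gradient wstar y = gradient m y - p := gradient_sub_const_inner h2 p
      have e2 : p + (gradient m y - p) = gradient m y := by abel
      rw [e1, e2]
      exact h1
    have hess : essSup (fun y => H (p + gradient wstar y) y) volume ≤ μ :=
      essSup_le_of_ae_le' ⟨m₀, fun y => hm₀ _ _⟩ hwstar_ae
    have hbdd : BddBelow {t | ∃ w ∈ SLplus d,
        t = essSup (fun y => H (p + gradient w y) y) volume} := by
      refine ⟨m₀, ?_⟩
      rintro t ⟨w', ⟨⟨C', hC'⟩, _⟩, rfl⟩
      exact le_essSup_of_ae_le (hub p C' w' hC') (Eventually.of_forall fun y => hm₀ _ _)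
    have hmem : essSup (fun y => H (p + gradient wstar y) y) volume ∈
        {t | ∃ w ∈ SLplus d, t = essSup (fun y => H (p + gradient w y) y) volume} :=
      ⟨wstar, hwstarSL, rfl⟩
    exact le_trans (csInf_le hbdd hmem) hess
  · -- (⇐)
    intro hHp ε hε
    obtain ⟨k, hk⟩ := exists_pow_lt_of_lt_one
      (show (0:ℝ) < (ε/4)/((Cu:ℝ) + ‖p‖ + 1) by positivity)
      (by norm_num : (1:ℝ)/2 < 1)
    set c : ℝ := (1/2)^k with hcdef
    have hc0 : 0 < c := by positivity
    have hc1 : c ≤ 1 := by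
      rw [hcdef]
      apply pow_le_one₀ <;> norm_num
    have hck : c * ((Cu:ℝ) + ‖p‖) ≤ ε/4 := by
      have h2 : (0:ℝ) < (Cu:ℝ) + ‖p‖ + 1 := by positivity
      have h1 : c * ((Cu:ℝ) + ‖p‖ + 1) < ε/4 := by
        have := (lt_div_iff₀ h2).mp hk
        linarith
      nlinarith [norm_nonneg p, Cu.coe_nonneg, hc0]
    -- the recursive level sequence
    set N : ℕ → ℝ → ℝ := fun j => Nat.rec (motive := fun _ => ℝ → ℝ)
      (fun _ => μ₀) (fun _ Nj s => Λ (Nj s) (μ + s)) j with hNdef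
    have hNs : ∀ j s, N (j+1) s = Λ (N j s) (μ + s) := fun _ _ => rfl
    have hN0 : ∀ j, N j 0 < μ := by
      intro j
      induction j with
      | zero => exact hμ₀lt
      | succ j ih =>
        have h1 := hΛstrict (N j 0) (μ + 0) (by rw [add_zero]; exact ne_of_lt ih)
        have h2 : max (N j 0) (μ + 0) = μ := by rw [add_zero]; exact max_eq_right ih.le
        rw [hNs]
        calc Λ (N j 0) (μ + 0) < max (N j 0) (μ + 0) := h1
          _ = μ := h2
    have hNcont : ∀ j, Continuous (N j) := by
      intro j
      induction j with
      | zero => exact continuous_const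
      | succ j ih =>
        have e : N (j+1) = (fun q : ℝ × ℝ => Λ q.1 q.2) ∘ (fun s => (N j s, μ + s)) := by
          funext s
          simp [hNs]
        rw [e]
        exact hΛcont.comp (ih.prodMk (continuous_const.add continuous_id))
    have hev : ∀ᶠ s in nhds (0:ℝ), N k s < μ :=
      Filter.Tendsto.eventually_lt_const (hN0 k) ((hNcont k).tendsto 0)
    obtain ⟨δs, hδs0, hδs⟩ := Metric.eventually_nhds_iff.mp hev
    set s : ℝ := δs/2 with hsdef
    have hs0 : 0 < s := by rw [hsdef]; linarith
    have hNks : N k s < μ := by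
      refine hδs ?_
      rw [Real.dist_eq, sub_zero, abs_of_pos hs0, hsdef]
      linarith
    -- a near-optimal SL⁺ corrector w at level μ + s
    have hSplus_ne : {t | ∃ w ∈ SLplus d,
        t = essSup (fun y => H (p + gradient w y) y) volume}.Nonempty := by
      refine ⟨_, ⟨(0 : Ed d → ℝ), ⟨h0lip, ?_⟩, rfl⟩⟩
      intro ε' hε'
      refine ⟨1, fun y _ => ?_⟩
      simp only [Pi.zero_apply, zero_div]
      linarith
    obtain ⟨tw, htwS, htwlt⟩ := exists_lt_of_csInf_lt hSplus_ne
      (show sInf _ < μ + s from lt_of_le_of_lt hHp (by linarith))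
    obtain ⟨w, hwSL, htw⟩ := htwS
    obtain ⟨⟨Cw, hCw⟩, hwsub⟩ := hwSL
    have hw_ae : ∀ᵐ z ∂volume, H (p + gradient w z) z ≤ μ + s := by
      have := ae_lt_of_essSup_lt' (hub p Cw w hCw) (by rw [← htw]; exact htwlt)
      exact this.mono fun z hz => hz.le
    -- the dyadic interpolation sequence
    set V : Ed d → ℝ := fun y => ⟪p, y⟫ + w y with hVdef
    have hVlip : LipschitzWith (‖p‖₊ + Cw) V := (lipschitz_inner_const p).add hCw
    set G : ℕ → Ed d → ℝ := fun j => Nat.rec (motive := fun _ => Ed d → ℝ)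
      u (fun _ g y => (g y + V y)/2) j with hGdef
    have hGs : ∀ j, G (j+1) = fun y => (G j y + V y)/2 := fun _ => rfl
    have hGlip : ∀ j, ∃ C : ℝ≥0, LipschitzWith C (G j) := by
      intro j
      induction j with
      | zero => exact ⟨Cu, hCu⟩
      | succ j ih =>
        obtain ⟨Cj, hCj⟩ := ih
        exact ⟨Cj + (‖p‖₊ + Cw), by rw [hGs]; exact lipschitzWith_half_add hCj hVlip⟩
    have hGae : ∀ j, ∀ᵐ z ∂volume, H (gradient (G j) z) z ≤ N j s := by
      intro j
      induction j with
      | zero => exact hu_ae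
      | succ j ih =>
        obtain ⟨Cj, hCj⟩ := hGlip j
        filter_upwards [ih, hw_ae, hCj.ae_differentiableAt (μ := volume),
          hCw.ae_differentiableAt (μ := volume)] with z h1 h2 h3 h4
        have hVd : DifferentiableAt ℝ V z :=
          ((hasFDerivAt_inner_const p z).differentiableAt).add h4
        have e1 : gradient (G (j+1)) z = (1/2:ℝ) • (gradient (G j) z + gradient V z) := by
          rw [hGs]
          exact gradient_half_add h3 hVd
        have e2 : gradient V z = p + gradient w z := gradient_const_inner_add h4 p
        rw [hNs, e1, e2]
        calc H ((1/2:ℝ) • (gradient (G j) z + (p + gradient w z))) z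
            ≤ Λ (H (gradient (G j) z) z) (H (p + gradient w z) z) := hsqc _ _ _
          _ ≤ Λ (N j s) (μ + s) := hΛmono _ _ _ _ h1 h2
    have hGform : ∀ j y, G j y = (1 - (1/2:ℝ)^j) * V y + (1/2:ℝ)^j * u y := by
      intro j
      induction j with
      | zero =>
        intro y
        have e0 : G 0 y = u y := rfl
        rw [e0]
        norm_num
      | succ j ih =>
        intro y
        have e : G (j+1) y = (G j y + V y)/2 := by rw [hGs]
        rw [e, ih y, pow_succ]
        ring
    have hGk_mem : G k ∈ LipFuns d := hGlip k
    have hGk_ae : ∀ᵐ z ∂volume, H (gradient (G k) z) z ≤ μ :=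
      (hGae k).mono fun z hz => le_trans hz hNks.le
    have hmge : ∀ y, G k y - G k x ≤ mMu d H μ y x := by
      intro y
      rw [hmMu_eq]
      exact le_csSup (hA_bdd y) ⟨G k, hGk_mem, hGk_ae, rfl⟩
    obtain ⟨R₁, hR₁⟩ := hwsub (ε/2) (by linarith)
    set B : ℝ := |G k x| + |u 0| with hBdef
    have hB0 : 0 ≤ B := by positivity
    refine ⟨max (max R₁ 1) ((B + 1) * (4/ε)), fun y hy => ?_⟩
    have hy1 : (1:ℝ) ≤ ‖y‖ := le_trans (le_trans (le_max_right R₁ 1) (le_max_left _ _)) hy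
    have hy0 : (0:ℝ) < ‖y‖ := lt_of_lt_of_le one_pos hy1
    rw [le_div_iff₀ hy0]
    have hwy : -(ε/2) * ‖y‖ ≤ w y := by
      have h1 := hR₁ y (le_trans (le_trans (le_max_left R₁ 1) (le_max_left _ _)) hy)
      have := (le_div_iff₀ hy0).mp h1
      linarith
    have hup : ⟪p, y⟫ ≤ ‖p‖ * ‖y‖ := real_inner_le_norm p y
    have huy : u 0 - (Cu:ℝ) * ‖y‖ ≤ u y := by
      have h1 := hCu.dist_le_mul y 0
      rw [Real.dist_eq, dist_zero_right] at h1
      have := (abs_le.mp h1).1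
      linarith
    have hBy : B + 1 ≤ (ε/4) * ‖y‖ := by
      have h := le_trans (le_max_right (max R₁ 1) ((B+1)*(4/ε))) hy
      have hε4 : (0:ℝ) < ε/4 := by linarith
      calc B + 1 = ((B+1)*(4/ε)) * (ε/4) := by field_simp
        _ ≤ ‖y‖ * (ε/4) := mul_le_mul_of_nonneg_right h hε4.le
        _ = (ε/4) * ‖y‖ := by ring
    have hGky : G k y = (1 - c) * (⟪p, y⟫ + w y) + c * u y := hGform k y
    have hGkx_ub : G k x ≤ |G k x| := le_abs_self _
    have hBy' : |G k x| + |u 0| + 1 ≤ (ε/4) * ‖y‖ := by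
      rw [hBdef] at hBy
      linarith
    have key : -ε * ‖y‖ ≤ G k y - G k x - ⟪p, y⟫ := by
      rw [hGky]
      have p1 : (1-c) * (-(ε/2) * ‖y‖) ≤ (1-c) * w y :=
        mul_le_mul_of_nonneg_left hwy (by linarith)
      have p2 : c * ⟪p, y⟫ ≤ c * (‖p‖ * ‖y‖) := mul_le_mul_of_nonneg_left hup hc0.le
      have p3 : c * (u 0 - (Cu:ℝ) * ‖y‖) ≤ c * u y := mul_le_mul_of_nonneg_left huy hc0.le
      have p4 : c * ((Cu:ℝ) + ‖p‖) * ‖y‖ ≤ (ε/4) * ‖y‖ :=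
        mul_le_mul_of_nonneg_right hck (norm_nonneg y)
      have p5 : c * (-(|u 0|)) ≤ c * u 0 := mul_le_mul_of_nonneg_left (neg_abs_le _) hc0.le
      have p6 : c * |u 0| ≤ 1 * |u 0| := mul_le_mul_of_nonneg_right hc1 (abs_nonneg _)
      have p7 : 0 ≤ c * (ε/2 * ‖y‖) := by positivity
      nlinarith [p1, p2, p3, p4, p5, p6, p7, hBy', hGkx_ub, norm_nonneg y]
    have := hmge y
    linarith
end
end
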